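/- arXiv:1804.05856 — 11 statements merged into one kernel-verified Lean document; each statement's English description precedes it below -/
import Mathlib

section
/- For any Hermitian matrix A and any subset of indexed Hermitian matrices, the maximum over unit vectors ψ of ∑_i |⟨ψ| A_i |ψ⟩|, where A_i are Hermitian with ∑_i A_i = 0, equals 2 · max over subsets Δ of the largest eigenvalue of ∑_{i∈Δ} A_i (when this maximum is nonnegative). -/
open Finset Matrix

lemma herm_real {d : ℕ} {A : Matrix (Fin d) (Fin d) ℂ} (hA : A.IsHermitian) (ψ : Fin d → ℂ) :
    ∃ r : ℝ, star ψ ⬝ᵥ A.mulVec ψ = (r : ℂ) := by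
  have h : (starRingEnd ℂ) (star ψ ⬝ᵥ A.mulVec ψ) = star ψ ⬝ᵥ A.mulVec ψ := by
    show star _ = _
    conv_lhs => rw [star_dotProduct, star_star, star_mulVec, hA.eq]
    rw [dotProduct_mulVec]
  exact ⟨_, (Complex.conj_eq_iff_re.mp h).symm⟩

theorem stmt2 (d n : ℕ) (A : Fin n → Matrix (Fin d) (Fin d) ℂ)
    (hA : ∀ i, (A i).IsHermitian) (hsum : ∑ i, A i = 0)
    (lam : Finset (Fin n) → ℝ)
    -- `lam Δ` is the largest eigenvalue of `∑ i in Δ, A i`, characterized by the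
    -- Rayleigh quotient principle
    (hlam : ∀ Δ : Finset (Fin n),
      IsGreatest {t : ℝ | ∃ ψ : Fin d → ℂ, star ψ ⬝ᵥ ψ = 1 ∧
        star ψ ⬝ᵥ (∑ i ∈ Δ, A i).mulVec ψ = (t : ℂ)} (lam Δ))
    (hnonneg : 0 ≤ Finset.univ.powerset.sup' (by simp) lam) :
    IsGreatest
      {s : ℝ | ∃ ψ : Fin d → ℂ, star ψ ⬝ᵥ ψ = 1 ∧
        s = ∑ i, ‖star ψ ⬝ᵥ (A i).mulVec ψ‖}
      (2 * Finset.univ.powerset.sup' (by simp) lam) := by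
  set M := Finset.univ.powerset.sup' (by simp) lam with hM
  -- generic facts about a unit vector ψ
  have main : ∀ ψ : Fin d → ℂ, star ψ ⬝ᵥ ψ = 1 →
      ∃ x : Fin n → ℝ,
        (∀ i, star ψ ⬝ᵥ (A i).mulVec ψ = (x i : ℂ)) ∧
        (∀ Δ : Finset (Fin n), star ψ ⬝ᵥ (∑ i ∈ Δ, A i).mulVec ψ = ((∑ i ∈ Δ, x i : ℝ) : ℂ)) ∧
        (∀ Δ : Finset (Fin n), ∑ i ∈ Δ, x i ≤ M) ∧
        (∑ i, x i = 0) ∧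
        (∑ i, ‖star ψ ⬝ᵥ (A i).mulVec ψ‖ = ∑ i, |x i|) ∧
        (∑ i, |x i| ≤ 2 * M) := by
    intro ψ hunit
    choose x hx using fun i => herm_real (hA i) ψ
    have hsumΔ : ∀ Δ : Finset (Fin n),
        star ψ ⬝ᵥ (∑ i ∈ Δ, A i).mulVec ψ = ((∑ i ∈ Δ, x i : ℝ) : ℂ) := by
      intro Δ
      have hlin : star ψ ⬝ᵥ (∑ i ∈ Δ, A i).mulVec ψ = ∑ i ∈ Δ, star ψ ⬝ᵥ (A i).mulVec ψ := by
        induction Δ using Finset.induction_on with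
        | empty => simp
        | insert _ _ h ih =>
          rw [Finset.sum_insert h, Matrix.add_mulVec, dotProduct_add, ih, Finset.sum_insert h]
      rw [hlin]
      push_cast
      exact Finset.sum_congr rfl fun i _ => hx i
    have hle : ∀ Δ : Finset (Fin n), ∑ i ∈ Δ, x i ≤ M := by
      intro Δ
      have h1 : ∑ i ∈ Δ, x i ≤ lam Δ :=
        (hlam Δ).2 ⟨ψ, hunit, hsumΔ Δ⟩
      exact h1.trans (Finset.le_sup' lam (Finset.mem_powerset.mpr (Finset.subset_univ Δ)))
    have hzero : ∑ i, x i = 0 := by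
      have := hsumΔ Finset.univ
      rw [hsum] at this
      simp only [Matrix.zero_mulVec, dotProduct_zero] at this
      exact_mod_cast this.symm
    refine ⟨x, hx, hsumΔ, hle, hzero, ?_, ?_⟩
    · exact Finset.sum_congr rfl fun i _ => by rw [hx i, Complex.norm_real, Real.norm_eq_abs]
    · -- upper bound
      have hsplit : ∑ i, |x i| =
          (∑ i ∈ Finset.univ.filter (fun i => 0 ≤ x i), |x i|) +
          (∑ i ∈ Finset.univ.filter (fun i => ¬ 0 ≤ x i), |x i|) :=
        (Finset.sum_filter_add_sum_filter_not _ _ _).symm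
      have h1 : ∑ i ∈ Finset.univ.filter (fun i => 0 ≤ x i), |x i| =
          ∑ i ∈ Finset.univ.filter (fun i => 0 ≤ x i), x i :=
        Finset.sum_congr rfl fun i hi => abs_of_nonneg (Finset.mem_filter.mp hi).2
      have h2 : ∑ i ∈ Finset.univ.filter (fun i => ¬ 0 ≤ x i), |x i| =
          - ∑ i ∈ Finset.univ.filter (fun i => ¬ 0 ≤ x i), x i := by
        rw [← Finset.sum_neg_distrib]
        exact Finset.sum_congr rfl fun i hi =>
          abs_of_neg (lt_of_not_ge (Finset.mem_filter.mp hi).2)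
      have h3 : (∑ i ∈ Finset.univ.filter (fun i => 0 ≤ x i), x i) +
          (∑ i ∈ Finset.univ.filter (fun i => ¬ 0 ≤ x i), x i) = 0 := by
        rw [Finset.sum_filter_add_sum_filter_not]; exact hzero
      have := hle (Finset.univ.filter (fun i => 0 ≤ x i))
      rw [hsplit, h1, h2]
      linarith
  constructor
  · -- membership
    obtain ⟨Δ₀, _, hΔ₀⟩ := Finset.exists_mem_eq_sup'
      (by simp : (Finset.univ.powerset : Finset (Finset (Fin n))).Nonempty) lam
    obtain ⟨ψ, hunit, hval⟩ := (hlam Δ₀).1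
    obtain ⟨x, hx, hsumΔ, hle, hzero, habs, hub⟩ := main ψ hunit
    have hxeq : ∑ i ∈ Δ₀, x i = lam Δ₀ := by
      have := (hsumΔ Δ₀).symm.trans hval
      exact_mod_cast this
    have hcompl : ∑ i ∈ Δ₀ᶜ, x i = - lam Δ₀ := by
      have := Finset.sum_add_sum_compl Δ₀ x
      rw [hzero] at this; linarith [hxeq ▸ this]
    have hlb1 : lam Δ₀ ≤ ∑ i ∈ Δ₀, |x i| :=
      hxeq ▸ Finset.sum_le_sum fun i _ => le_abs_self (x i)
    have hlb2 : lam Δ₀ ≤ ∑ i ∈ Δ₀ᶜ, |x i| := by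
      have : - ∑ i ∈ Δ₀ᶜ, x i ≤ ∑ i ∈ Δ₀ᶜ, |x i| := by
        rw [← Finset.sum_neg_distrib]
        exact Finset.sum_le_sum fun i _ => neg_le_abs (x i)
      rw [hcompl] at this; linarith
    have htot : ∑ i ∈ Δ₀, |x i| + ∑ i ∈ Δ₀ᶜ, |x i| = ∑ i, |x i| :=
      Finset.sum_add_sum_compl Δ₀ _
    refine ⟨ψ, hunit, ?_⟩
    have hMeq : M = lam Δ₀ := hΔ₀
    rw [habs]
    linarith
  · -- upper bound
    rintro s ⟨ψ, hunit, rfl⟩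
    obtain ⟨x, hx, hsumΔ, hle, hzero, habs, hub⟩ := main ψ hunit
    rw [habs]; exact hub
end

section
/- Let U be a d×d unitary matrix with columns u_i = U|i⟩. Then there exists a unit vector ψ with ∑_i |⟨ψ|(|i⟩⟨i| − |u_i⟩⟨u_i|)|ψ⟩| = 2 if and only if there exists a nonempty proper subset Δ of {1,...,d} such that the principal submatrix U_Δ = (U_{ij})_{i,j∈Δ} is singular (rank-deficient). -/
open Finset Matrix

private lemma abs_sub_eq_add_iff {a b : ℝ} (ha : 0 ≤ a) (hb : 0 ≤ b) :
    |a - b| = a + b ↔ a = 0 ∨ b = 0 := by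
  constructor
  · intro h
    rcases abs_cases (a - b) with ⟨h1, _⟩ | ⟨h1, _⟩
    · right; linarith
    · left; linarith
  · rintro (rfl | rfl) <;> simp [abs_of_nonneg, abs_of_nonpos, ha, hb, neg_nonpos]

private lemma key_real {d : ℕ} (a b : Fin d → ℝ) (ha : ∀ i, 0 ≤ a i) (hb : ∀ i, 0 ≤ b i)
    (ha1 : ∑ i, a i = 1) (hb1 : ∑ i, b i = 1) :
    ∑ i, |a i - b i| = 2 ↔ ∀ i, a i = 0 ∨ b i = 0 := by
  have hle : ∀ i ∈ Finset.univ, |a i - b i| ≤ a i + b i := by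
    intro i _
    rcases abs_cases (a i - b i) with ⟨h1, _⟩ | ⟨h1, _⟩ <;> rw [h1]
    · linarith [hb i]
    · linarith [ha i]
  have hsum : ∑ i, (a i + b i) = 2 := by
    rw [Finset.sum_add_distrib, ha1, hb1]; norm_num
  rw [show (2:ℝ) = ∑ i, (a i + b i) from hsum.symm,
    Finset.sum_eq_sum_iff_of_le hle]
  simp only [Finset.mem_univ, true_implies]
  exact forall_congr' fun i => abs_sub_eq_add_iff (ha i) (hb i)

private lemma dot_vecMulVec {d : ℕ} (ψ v w : Fin d → ℂ) :
    star ψ ⬝ᵥ (Matrix.vecMulVec v w *ᵥ ψ) = (star ψ ⬝ᵥ v) * (w ⬝ᵥ ψ) := by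
  simp only [mulVec, dotProduct, vecMulVec_apply, Finset.mul_sum, Finset.sum_mul]
  rw [Finset.sum_comm]
  exact Finset.sum_congr rfl fun j _ => Finset.sum_congr rfl fun k _ => by ring

private lemma term_eq {d : ℕ} (U : Matrix (Fin d) (Fin d) ℂ) (ψ : Fin d → ℂ) (i : Fin d) :
    star ψ ⬝ᵥ (Matrix.single i i (1 : ℂ) -
      Matrix.vecMulVec (fun k => U k i) (star (fun k => U k i))).mulVec ψ
    = (((‖ψ i‖)^2 : ℝ) : ℂ) - (((‖(Uᴴ *ᵥ ψ) i‖)^2 : ℝ) : ℂ) := by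
  have h1 : star ψ ⬝ᵥ (Matrix.single i i (1:ℂ) *ᵥ ψ) = (starRingEnd ℂ) (ψ i) * ψ i := by
    simp [mulVec, dotProduct, Matrix.single_apply, ite_and, mul_ite, Finset.sum_ite_eq,
      Pi.star_apply, RCLike.star_def]
  have hφ : (star (fun k => U k i)) ⬝ᵥ ψ = (Uᴴ *ᵥ ψ) i := by
    simp [mulVec, dotProduct, conjTranspose_apply, RCLike.star_def]
  have hφ' : star ψ ⬝ᵥ (fun k => U k i) = (starRingEnd ℂ) ((Uᴴ *ᵥ ψ) i) := by
    simp only [mulVec, dotProduct, conjTranspose_apply, map_sum, Pi.star_apply, RCLike.star_def]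
    exact Finset.sum_congr rfl fun k _ => by
      rw [RingHom.map_mul, Complex.conj_conj]; ring
  rw [Matrix.sub_mulVec, dotProduct_sub, h1, dot_vecMulVec, hφ, hφ']
  rw [mul_comm ((starRingEnd ℂ) (ψ i)) (ψ i), Complex.mul_conj]
  rw [mul_comm ((starRingEnd ℂ) ((Uᴴ *ᵥ ψ) i)) _, Complex.mul_conj]
  simp [Complex.normSq_eq_norm_sq]

private lemma dot_self_eq {d : ℕ} (ψ : Fin d → ℂ) :
    star ψ ⬝ᵥ ψ = ((∑ i, (‖ψ i‖)^2 : ℝ) : ℂ) := by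
  rw [Complex.ofReal_sum]
  refine Finset.sum_congr rfl fun i _ => ?_
  rw [Pi.star_apply, RCLike.star_def, mul_comm, Complex.mul_conj, Complex.normSq_eq_norm_sq]

private lemma phi_norm {d : ℕ} {U : Matrix (Fin d) (Fin d) ℂ}
    (hU : U ∈ Matrix.unitaryGroup (Fin d) ℂ) (ψ : Fin d → ℂ) :
    star (Uᴴ *ᵥ ψ) ⬝ᵥ (Uᴴ *ᵥ ψ) = star ψ ⬝ᵥ ψ := by
  have hUU : U * Uᴴ = 1 := by
    have := (Matrix.mem_unitaryGroup_iff).mp hU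
    rwa [Matrix.star_eq_conjTranspose] at this
  rw [star_mulVec, conjTranspose_conjTranspose, dotProduct_mulVec, vecMul_vecMul, hUU,
    vecMul_one]

theorem stmt3 (d : ℕ) (U : Matrix (Fin d) (Fin d) ℂ)
    (hU : U ∈ Matrix.unitaryGroup (Fin d) ℂ) :
    (∃ ψ : Fin d → ℂ, star ψ ⬝ᵥ ψ = 1 ∧
      ∑ i, ‖star ψ ⬝ᵥ
        (Matrix.single i i (1 : ℂ) -
          Matrix.vecMulVec (fun k => U k i) (star (fun k => U k i))).mulVec ψ‖ = 2)
    ↔ (∃ Δ : Finset (Fin d), Δ.Nonempty ∧ Δ ≠ Finset.univ ∧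
        (U.submatrix (fun i : Δ => (i : Fin d)) (fun j : Δ => (j : Fin d))).det = 0) := by
  classical
  have sum_rewrite : ∀ ψ : Fin d → ℂ,
      ∑ i, ‖star ψ ⬝ᵥ
        (Matrix.single i i (1 : ℂ) -
          Matrix.vecMulVec (fun k => U k i) (star (fun k => U k i))).mulVec ψ‖
      = ∑ i, |(‖ψ i‖)^2 - (‖(Uᴴ *ᵥ ψ) i‖)^2| := by
    intro ψ
    refine Finset.sum_congr rfl fun i _ => ?_
    rw [term_eq, ← Complex.ofReal_sub, Complex.norm_real, Real.norm_eq_abs]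
  constructor
  · rintro ⟨ψ, hψ, hsum⟩
    set φ := Uᴴ *ᵥ ψ with hφdef
    have ha1 : ∑ i, (‖ψ i‖)^2 = 1 := by
      have := (dot_self_eq ψ).symm.trans hψ
      exact_mod_cast this
    have hb1 : ∑ i, (‖φ i‖)^2 = 1 := by
      have := (dot_self_eq φ).symm.trans ((phi_norm hU ψ).trans hψ)
      exact_mod_cast this
    rw [sum_rewrite ψ] at hsum
    have hkey := (key_real _ _ (fun i => sq_nonneg _) (fun i => sq_nonneg _) ha1 hb1).mp hsum
    have hdisj : ∀ i, ψ i = 0 ∨ φ i = 0 := by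
      intro i
      rcases hkey i with h | h
      · left; have := pow_eq_zero_iff (n := 2) (by norm_num) |>.mp h
        exact norm_eq_zero.mp this
      · right; have := pow_eq_zero_iff (n := 2) (by norm_num) |>.mp h
        exact norm_eq_zero.mp this
    have hψ0 : ψ ≠ 0 := by
      intro h; rw [h] at hψ; simp at hψ
    have hφ0 : φ ≠ 0 := by
      intro h
      have := (phi_norm hU ψ).trans hψ
      rw [← hφdef, h] at this; simp at this
    set Δ : Finset (Fin d) := Finset.univ.filter (fun i => ψ i ≠ 0) with hΔdef
    obtain ⟨i₀, hi₀''⟩ := Function.ne_iff.mp hψ0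
    obtain ⟨j₀, hj₀''⟩ := Function.ne_iff.mp hφ0
    have hi₀ : ψ i₀ ≠ 0 := by simpa using hi₀''
    have hj₀ : φ j₀ ≠ 0 := by simpa using hj₀''
    refine ⟨Δ, ⟨i₀, by simp [hΔdef, hi₀]⟩, ?_, ?_⟩
    · intro h
      have hj : j₀ ∈ Δ := h ▸ Finset.mem_univ j₀
      have : ψ j₀ ≠ 0 := by simpa [hΔdef] using hj
      rcases hdisj j₀ with h' | h' <;> [exact this h'; exact hj₀ h']
    · set B := U.submatrix (fun i : Δ => (i : Fin d)) (fun j : Δ => (j : Fin d)) with hBdef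
      have hdetH : Bᴴ.det = 0 := by
        refine Matrix.exists_mulVec_eq_zero_iff.mp ?_
        refine ⟨fun k : Δ => ψ k, ?_, ?_⟩
        · have hi₀Δ : i₀ ∈ Δ := by simp [hΔdef, hi₀]
          exact Function.ne_iff.mpr ⟨⟨i₀, hi₀Δ⟩, by simpa using hi₀⟩
        · funext i
          have hiΔ : (i : Fin d) ∈ Δ := i.2
          have hψi : ψ (i : Fin d) ≠ 0 := by
            exact (Finset.mem_filter.mp hiΔ).2
          have hφi : φ (i : Fin d) = 0 := (hdisj i).resolve_left hψi
          have : (Bᴴ *ᵥ fun k : Δ => ψ k) i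
              = ∑ k : Δ, (starRingEnd ℂ) (U (k : Fin d) (i : Fin d)) * ψ (k : Fin d) := by
            simp [mulVec, dotProduct, hBdef, conjTranspose_apply, RCLike.star_def]
          rw [this]
          have hext : ∑ k : Δ, (starRingEnd ℂ) (U (k : Fin d) (i : Fin d)) * ψ (k : Fin d)
              = ∑ k, (starRingEnd ℂ) (U k (i : Fin d)) * ψ k := by
            rw [Finset.sum_coe_sort Δ (fun k => (starRingEnd ℂ) (U k (i : Fin d)) * ψ k)]
            refine Finset.sum_subset (Finset.subset_univ Δ) fun k _ hk => ?_
            have : ψ k = 0 := by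
              by_contra h; exact hk (by simp [hΔdef, h])
            simp [this]
          rw [hext]
          have : φ (i : Fin d) = ∑ k, (starRingEnd ℂ) (U k (i : Fin d)) * ψ k := by
            simp [hφdef, mulVec, dotProduct, conjTranspose_apply, RCLike.star_def]
          rw [← this, hφi]; rfl
      rw [Matrix.det_conjTranspose] at hdetH
      exact star_eq_zero.mp hdetH
  · rintro ⟨Δ, hne, hproper, hdet⟩
    set B := U.submatrix (fun i : Δ => (i : Fin d)) (fun j : Δ => (j : Fin d)) with hBdef
    have hdetH : Bᴴ.det = 0 := by
      rw [Matrix.det_conjTranspose, hdet, star_zero]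
    obtain ⟨v, hv0, hv⟩ := Matrix.exists_mulVec_eq_zero_iff.mpr hdetH
    set ψ₀ : Fin d → ℂ := fun k => if h : k ∈ Δ then v ⟨k, h⟩ else 0 with hψ₀def
    obtain ⟨k₀, hk₀''⟩ := Function.ne_iff.mp hv0
    have hk₀ : v k₀ ≠ 0 := by simpa using hk₀''
    have hψ₀k₀ : ψ₀ (k₀ : Fin d) ≠ 0 := by
      simp only [hψ₀def, dif_pos k₀.2]
      simpa using hk₀
    set n : ℝ := ∑ k, (‖ψ₀ k‖)^2 with hndef
    have hn0 : 0 < n := by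
      have h1 : 0 < (‖ψ₀ (k₀ : Fin d)‖)^2 :=
        pow_pos (norm_pos_iff.mpr hψ₀k₀) 2
      have h2 : (‖ψ₀ (k₀ : Fin d)‖)^2 ≤ n :=
        Finset.single_le_sum (f := fun k => (‖ψ₀ k‖)^2)
          (fun k _ => sq_nonneg _) (Finset.mem_univ (k₀ : Fin d))
      linarith
    set c : ℝ := (Real.sqrt n)⁻¹ with hcdef
    have hc0 : 0 < c := by
      rw [hcdef]; positivity
    set ψ : Fin d → ℂ := fun k => (c : ℂ) * ψ₀ k with hψdef
    have hψsum : ∑ k, (‖ψ k‖)^2 = 1 := by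
      have : ∀ k, (‖ψ k‖)^2 = c^2 * (‖ψ₀ k‖)^2 := by
        intro k
        rw [hψdef]
        rw [norm_mul, mul_pow, Complex.norm_real, Real.norm_eq_abs, abs_of_pos hc0]
      rw [Finset.sum_congr rfl fun k _ => this k, ← Finset.mul_sum, ← hndef, hcdef,
        ← Real.sqrt_inv, Real.sq_sqrt (by positivity), inv_mul_cancel₀ (ne_of_gt hn0)]
    have hψnorm : star ψ ⬝ᵥ ψ = 1 := by
      rw [dot_self_eq, hψsum, Complex.ofReal_one]
    set φ := Uᴴ *ᵥ ψ with hφdef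
    have hφΔ : ∀ i : Fin d, i ∈ Δ → φ i = 0 := by
      intro i hi
      have hφi : φ i = (c : ℂ) * ∑ k, (starRingEnd ℂ) (U k i) * ψ₀ k := by
        simp only [hφdef, hψdef, mulVec, dotProduct, conjTranspose_apply, RCLike.star_def,
          Finset.mul_sum]
        exact Finset.sum_congr rfl fun k _ => by ring
      have hres : ∑ k, (starRingEnd ℂ) (U k i) * ψ₀ k
          = ∑ k : Δ, (starRingEnd ℂ) (U (k : Fin d) i) * v k := by
        have e1 : ∑ k, (starRingEnd ℂ) (U k i) * ψ₀ k
            = ∑ k ∈ Δ, (starRingEnd ℂ) (U k i) * ψ₀ k :=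
          (Finset.sum_subset (Finset.subset_univ Δ)
            (fun k _ hk => by simp [hψ₀def, dif_neg hk])).symm
        rw [e1, ← Finset.sum_coe_sort Δ (fun k => (starRingEnd ℂ) (U k i) * ψ₀ k)]
        refine Finset.sum_congr rfl fun k _ => ?_
        simp [hψ₀def, dif_pos k.2]
      have hBv : (Bᴴ *ᵥ v) ⟨i, hi⟩ = ∑ k : Δ, (starRingEnd ℂ) (U (k : Fin d) i) * v k := by
        simp [mulVec, dotProduct, hBdef, conjTranspose_apply, RCLike.star_def]
      rw [hφi, hres, ← hBv, hv]
      simp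
    have hψΔ : ∀ i : Fin d, i ∉ Δ → ψ i = 0 := by
      intro i hi
      simp [hψdef, hψ₀def, dif_neg hi]
    refine ⟨ψ, hψnorm, ?_⟩
    rw [sum_rewrite ψ]
    have hb1 : ∑ i, (‖φ i‖)^2 = 1 := by
      have := (dot_self_eq φ).symm.trans ((phi_norm hU ψ).trans hψnorm)
      exact_mod_cast this
    refine (key_real _ _ (fun i => sq_nonneg _) (fun i => sq_nonneg _) hψsum hb1).mpr ?_
    intro i
    by_cases hi : i ∈ Δ
    · right; rw [hφΔ i hi]; simp
    · left; rw [hψΔ i hi]; simp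
end

section
/- Let U be a d×d unitary matrix and E a diagonal unitary matrix chosen so that all diagonal entries of UE are nonnegative reals. If there exists a density matrix ρ with diag(U†ρ) = 0, then Tr(UE) ≤ d − 2. -/
open Matrix
open scoped ComplexOrder

/-- Core geometric lemma at the "partially diagonalized" level:
`B = D + iC` is unitary with Hermitian part the real diagonal `D = diagonal a` and
skew part `iC` with `C` Hermitian; `σ` is PSD of trace 1 with `tr(Dσ) = tr(Cσ) = 0`.
Then the total deficiency `∑ (1 - a k)` is at least 2. -/
theorem stmt6_core (d : ℕ) (a : Fin d → ℝ) (C σ : Matrix (Fin d) (Fin d) ℂ)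
    (hCH : Cᴴ = C)
    (hC2 : C * C = 1 - Matrix.diagonal (fun k => (a k : ℂ)) *
      Matrix.diagonal (fun k => (a k : ℂ)))
    (hCD : C * Matrix.diagonal (fun k => (a k : ℂ)) =
      Matrix.diagonal (fun k => (a k : ℂ)) * C)
    (hσ : σ.PosSemidef) (hσtr : σ.trace = 1)
    (ht1 : (Matrix.diagonal (fun k => (a k : ℂ)) * σ).trace = 0)
    (ht2 : (C * σ).trace = 0) :
    2 ≤ ∑ k, (1 - a k) := by
  set D : Matrix (Fin d) (Fin d) ℂ := Matrix.diagonal (fun k => (a k : ℂ)) with hDdef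
  -- Hermitian entries of C
  have hCherm : ∀ k l, C l k = starRingEnd ℂ (C k l) := by
    intro k l
    conv_lhs => rw [← hCH]
    simp [Matrix.conjTranspose_apply]
  -- diagonal of C*C
  have hCsq : ∀ k, (C * C) k k = ((∑ l, Complex.normSq (C k l) : ℝ) : ℂ) := by
    intro k
    rw [Matrix.mul_apply]
    push_cast
    refine Finset.sum_congr rfl fun l _ => ?_
    rw [hCherm k l, Complex.mul_conj]
  have hDDkk : ∀ k, (1 - D * D) k k = ((1 - a k ^ 2 : ℝ) : ℂ) := by
    intro k
    rw [hDdef, Matrix.diagonal_mul_diagonal, Matrix.sub_apply, Matrix.diagonal_apply_eq,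
      Matrix.one_apply_eq]
    push_cast
    ring
  have ha2 : ∀ k, a k ^ 2 ≤ 1 := by
    intro k
    have h : ((∑ l, Complex.normSq (C k l) : ℝ) : ℂ) = ((1 - a k ^ 2 : ℝ) : ℂ) := by
      rw [← hCsq k, ← hDDkk k, hC2]
    have h2 : (∑ l, Complex.normSq (C k l) : ℝ) = 1 - a k ^ 2 := by exact_mod_cast h
    have h3 : 0 ≤ ∑ l, Complex.normSq (C k l) :=
      Finset.sum_nonneg fun l _ => Complex.normSq_nonneg _
    linarith
  -- diagonal entries of σ
  set q : Fin d → ℝ := fun k => (σ k k).re with hqdef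
  have hσdiag : ∀ k, σ k k = ((q k : ℝ) : ℂ) ∧ 0 ≤ q k := by
    intro k
    have h0 : (0 : ℂ) ≤ σ k k := by
      have h := hσ.dotProduct_mulVec_nonneg (Pi.single k 1)
      have he : dotProduct (star (Pi.single k 1)) (σ *ᵥ Pi.single k 1) = σ k k := by
        simp [Matrix.mulVec_single, dotProduct, Pi.single_apply, apply_ite,
          Finset.sum_ite_eq']
      rwa [he] at h
    rw [Complex.le_def] at h0
    constructor
    · apply Complex.ext
      · simp [hqdef]
      · simp [← h0.2]
    · simpa using h0.1
  have hq1 : ∑ k, q k = 1 := by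
    have h : ∑ k, σ k k = 1 := by rw [← hσtr]; simp [Matrix.trace, Matrix.diag]
    have h2 : ((∑ k, q k : ℝ) : ℂ) = 1 := by
      push_cast
      rw [← h]
      exact Finset.sum_congr rfl fun k _ => ((hσdiag k).1).symm
    exact_mod_cast h2
  have hqa : ∑ k, a k * q k = 0 := by
    have h : ∑ k, (D * σ) k k = 0 := by rw [← ht1]; simp [Matrix.trace, Matrix.diag, hDdef]
    have h2 : ((∑ k, a k * q k : ℝ) : ℂ) = 0 := by
      push_cast
      rw [← h]
      refine Finset.sum_congr rfl fun k _ => ?_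
      rw [hDdef, Matrix.diagonal_mul, (hσdiag k).1]
    exact_mod_cast h2
  by_contra hcon
  push_neg at hcon
  -- nonnegativity of the deficiencies
  have hdef_nonneg : ∀ k, 0 ≤ 1 - a k := by
    intro k
    nlinarith [ha2 k, sq_nonneg (1 - a k)]
  -- existence of j with a j ≤ 0 and q j > 0
  have hex : ∃ j, a j ≤ 0 ∧ 0 < q j := by
    by_contra hno
    push_neg at hno
    have hterm : ∀ k : Fin d, 0 ≤ a k * q k := by
      intro k
      rcases le_or_gt (a k) 0 with h | h
      · have h1 : q k ≤ 0 := hno k h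
        have h2 : q k = 0 := le_antisymm h1 (hσdiag k).2
        simp [h2]
      · exact mul_nonneg h.le (hσdiag k).2
    have hallzero : ∀ k : Fin d, k ∈ Finset.univ → a k * q k = 0 :=
      (Finset.sum_eq_zero_iff_of_nonneg fun k _ => hterm k).mp hqa
    have hqpos : ∃ k, 0 < q k := by
      by_contra hq
      push_neg at hq
      have : ∑ k, q k ≤ 0 := Finset.sum_nonpos fun k _ => hq k
      linarith
    obtain ⟨k, hk⟩ := hqpos
    have hak : a k = 0 := by
      have h := hallzero k (Finset.mem_univ k)
      rcases mul_eq_zero.mp h with h | h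
      · exact h
      · exact absurd h hk.ne'
    have := hno k (le_of_eq hak)
    linarith
  obtain ⟨j, haj, hqj⟩ := hex
  -- all other a's exceed -a j
  have hklt : ∀ k, k ≠ j → -a j < a k := by
    intro k hk
    have hsub : (1 - a j) + (1 - a k) ≤ ∑ l, (1 - a l) := by
      have h := Finset.sum_le_sum_of_subset_of_nonneg
        (Finset.subset_univ ({j, k} : Finset (Fin d)))
        (fun l _ _ => hdef_nonneg l)
      rwa [Finset.sum_pair (Ne.symm hk)] at h
    linarith
  -- C has zero off-diagonal entries in row/column j
  have hCkj : ∀ k, k ≠ j → C k j = 0 := by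
    intro k hk
    have h := congrFun (congrFun hCD k) j
    rw [hDdef, Matrix.mul_diagonal, Matrix.diagonal_mul] at h
    have hlt : a j < a k := by have := hklt k hk; linarith
    have hne : ((a j : ℂ)) - ((a k : ℂ)) ≠ 0 := by
      rw [sub_ne_zero]
      exact_mod_cast hlt.ne
    have hzero : C k j * ((a j : ℂ) - (a k : ℂ)) = 0 := by linear_combination h
    rcases mul_eq_zero.mp hzero with h' | h'
    · exact h'
    · exact absurd h' hne
  have hCjk : ∀ k, k ≠ j → C j k = 0 := by
    intro k hk
    rw [hCherm k j, hCkj k hk, map_zero]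
  set c : ℝ := (C j j).re with hcdef
  have him : (C j j).im = 0 := by
    have h := congrArg Complex.im (hCherm j j)
    simp at h
    linarith
  have hCjj : C j j = (c : ℂ) := by
    apply Complex.ext
    · simp [hcdef]
    · simp [him]
  have hc2 : c ^ 2 = 1 - a j ^ 2 := by
    have h := congrFun (congrFun hC2 j) j
    rw [Matrix.mul_apply] at h
    have hsum : ∑ l, C j l * C l j = C j j * C j j := by
      refine Finset.sum_eq_single j (fun l _ hl => ?_) (by simp)
      rw [hCjk l hl, zero_mul]
    rw [hsum, hCjj, hDDkk j] at h
    have h2 : ((c ^ 2 : ℝ) : ℂ) = ((1 - a j ^ 2 : ℝ) : ℂ) := by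
      push_cast at h ⊢
      linear_combination h
    exact_mod_cast h2
  have hcne : c ≠ 0 := by
    intro hc0
    have hsq : a j ^ 2 = 1 := by rw [hc0] at hc2; nlinarith
    have hfac : (a j - 1) * (a j + 1) = 0 := by linear_combination hsq
    have haj1 : a j = -1 := by
      rcases mul_eq_zero.mp hfac with h | h
      · exfalso; nlinarith
      · linarith
    have hsingle : 1 - a j ≤ ∑ l, (1 - a l) :=
      Finset.single_le_sum (fun l _ => hdef_nonneg l) (Finset.mem_univ j)
    rw [haj1] at hsingle
    linarith
  set s : ℝ := if 0 < c then 1 else -1 with hsdef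
  have hsc : s * c = |c| := by
    rcases lt_or_gt_of_ne hcne with h | h
    · rw [hsdef, if_neg (not_lt.mpr h.le), abs_of_neg h]; ring
    · rw [hsdef, if_pos h, abs_of_pos h]; ring
  have habs_s : |s| = 1 := by
    rw [hsdef]
    split <;> simp
  -- the certificate matrix G
  set G : Matrix (Fin d) (Fin d) ℂ :=
    ((s * c : ℝ) : ℂ) • D - ((s * a j : ℝ) : ℂ) • C with hGdef
  have hGapp : ∀ k l, G k l = ((s * c : ℝ) : ℂ) * D k l - ((s * a j : ℝ) : ℂ) * C k l := by
    intro k l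
    rw [hGdef]
    simp [Matrix.sub_apply, Matrix.smul_apply, smul_eq_mul]
  have hGrowj : ∀ l, G j l = 0 := by
    intro l
    by_cases hl : l = j
    · subst hl
      rw [hGapp, hDdef, Matrix.diagonal_apply_eq, hCjj]
      push_cast
      ring
    · rw [hGapp, hDdef, Matrix.diagonal_apply_ne _ (Ne.symm hl), hCjk l hl]
      simp
  have hGcolj : ∀ k, G k j = 0 := by
    intro k
    by_cases hk : k = j
    · subst hk; exact hGrowj k
    · rw [hGapp, hDdef, Matrix.diagonal_apply_ne _ hk, hCkj k hk]
      simp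
  -- key quadratic-form positivity, for vectors vanishing at j
  have key : ∀ y : Fin d → ℂ, y j = 0 →
      0 ≤ (dotProduct (star y) (G *ᵥ y)).re ∧
      ((dotProduct (star y) (G *ᵥ y)).re = 0 → y = 0) := by
    intro y hyj
    set p : Fin d → ℝ := fun k => Complex.normSq (y k) with hpdef
    have hpj : p j = 0 := by simp [hpdef, hyj]
    have hpnn : ∀ k, 0 ≤ p k := fun k => Complex.normSq_nonneg _
    have hDform : dotProduct (star y) (D *ᵥ y) = ((∑ k, a k * p k : ℝ) : ℂ) := by
      rw [hDdef, dotProduct]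
      push_cast
      refine Finset.sum_congr rfl fun k _ => ?_
      rw [Matrix.mulVec_diagonal, Pi.star_apply]
      have h1 : (star (y k)) * ((a k : ℂ) * y k) = (a k : ℂ) * (y k * star (y k)) := by ring
      rw [h1, RCLike.star_def, Complex.mul_conj]
    -- the vector z = C y
    set z : Fin d → ℂ := C *ᵥ y with hzdef
    have hz2 : ∑ k, Complex.normSq (z k) = ∑ k, (1 - a k ^ 2) * p k := by
      have h1 : dotProduct (star z) z = ((∑ k, Complex.normSq (z k) : ℝ) : ℂ) := by
        rw [dotProduct]
        push_cast
        refine Finset.sum_congr rfl fun k _ => ?_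
        rw [Pi.star_apply, RCLike.star_def, mul_comm, Complex.mul_conj]
      have h2 : dotProduct (star z) z = ((∑ k, (1 - a k ^ 2) * p k : ℝ) : ℂ) := by
        rw [hzdef, Matrix.star_mulVec, ← Matrix.dotProduct_mulVec, Matrix.mulVec_mulVec,
          hCH, hC2]
        rw [Matrix.sub_mulVec, dotProduct_sub, Matrix.one_mulVec,
          hDdef, Matrix.diagonal_mul_diagonal]
        have h3 : dotProduct (star y) y = ((∑ k, p k : ℝ) : ℂ) := by
          rw [dotProduct]
          push_cast
          refine Finset.sum_congr rfl fun k _ => ?_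
          rw [Pi.star_apply, RCLike.star_def, mul_comm, Complex.mul_conj]
        have h4 : dotProduct (star y)
            ((Matrix.diagonal fun k => (a k : ℂ) * (a k : ℂ)) *ᵥ y)
            = ((∑ k, a k ^ 2 * p k : ℝ) : ℂ) := by
          rw [dotProduct]
          push_cast
          refine Finset.sum_congr rfl fun k _ => ?_
          rw [Matrix.mulVec_diagonal, Pi.star_apply]
          have h5 : (star (y k)) * ((a k : ℂ) * (a k : ℂ) * y k)
              = (a k : ℂ) * (a k : ℂ) * (y k * star (y k)) := by ring
          rw [h5, RCLike.star_def, Complex.mul_conj]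
          push_cast
          ring
        rw [h3, h4]
        push_cast
        rw [← Finset.sum_sub_distrib]
        exact Finset.sum_congr rfl fun k _ => by ring
      rw [h1] at h2
      exact_mod_cast h2
    have habsb : ‖dotProduct (star y) z‖ ≤ |c| * ∑ k, p k := by
      have h1 : ‖dotProduct (star y) z‖
          ≤ ∑ k, ‖y k‖ * ‖z k‖ := by
        rw [dotProduct]
        refine le_trans (norm_sum_le _ _) (le_of_eq ?_)
        refine Finset.sum_congr rfl fun k _ => ?_
        rw [Pi.star_apply, norm_mul, RCLike.star_def, Complex.norm_conj]
      have h2 : (∑ k, ‖y k‖ * ‖z k‖) ^ 2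
          ≤ (∑ k, p k) * ∑ k, (1 - a k ^ 2) * p k := by
        have h3 := Finset.sum_mul_sq_le_sq_mul_sq Finset.univ
          (fun k => ‖y k‖) (fun k => ‖z k‖)
        have h4 : ∑ k, ‖y k‖ ^ 2 = ∑ k, p k :=
          Finset.sum_congr rfl fun k _ => by rw [Complex.sq_norm, hpdef]
        have h5 : ∑ k, ‖z k‖ ^ 2 = ∑ k, (1 - a k ^ 2) * p k := by
          rw [← hz2]
          exact Finset.sum_congr rfl fun k _ => by rw [Complex.sq_norm]
        rw [h4, h5] at h3
        exact h3
      have hpsum : 0 ≤ ∑ k, p k := Finset.sum_nonneg fun k _ => hpnn k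
      have h6 : ∑ k, (1 - a k ^ 2) * p k ≤ c ^ 2 * ∑ k, p k := by
        rw [Finset.mul_sum]
        refine Finset.sum_le_sum fun k _ => ?_
        by_cases hk : k = j
        · subst hk; simp [hpj]
        · have h7 : a j ^ 2 < a k ^ 2 := by nlinarith [hklt k hk]
          nlinarith [hpnn k]
      have h8 : (‖dotProduct (star y) z‖) ^ 2
          ≤ (|c| * ∑ k, p k) ^ 2 := by
        calc (‖dotProduct (star y) z‖) ^ 2
            ≤ (∑ k, ‖y k‖ * ‖z k‖) ^ 2 :=
              pow_le_pow_left₀ (norm_nonneg _) h1 2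
          _ ≤ (∑ k, p k) * ∑ k, (1 - a k ^ 2) * p k := h2
          _ ≤ (∑ k, p k) * (c ^ 2 * ∑ k, p k) := mul_le_mul_of_nonneg_left h6 hpsum
          _ = (|c| * ∑ k, p k) ^ 2 := by rw [mul_pow, sq_abs]; ring
      have h9 : 0 ≤ |c| * ∑ k, p k := mul_nonneg (abs_nonneg c) hpsum
      exact (pow_le_pow_iff_left₀ (norm_nonneg _) h9 two_ne_zero).mp h8
    -- assemble the quadratic form
    have hsplit : dotProduct (star y) (G *ᵥ y) =
        ((s * c : ℝ) : ℂ) * dotProduct (star y) (D *ᵥ y) -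
        ((s * a j : ℝ) : ℂ) * dotProduct (star y) z := by
      rw [hGdef, Matrix.sub_mulVec, dotProduct_sub, Matrix.smul_mulVec,
        Matrix.smul_mulVec, dotProduct_smul, dotProduct_smul,
        smul_eq_mul, smul_eq_mul, hzdef]
    have hre : (dotProduct (star y) (G *ᵥ y)).re =
        (s * c) * (∑ k, a k * p k) - (s * a j) * (dotProduct (star y) z).re := by
      rw [hsplit, hDform]
      simp [Complex.mul_re, Complex.ofReal_re, Complex.ofReal_im]
    have hb : (s * a j) * (dotProduct (star y) z).re
        ≤ (-(a j)) * (|c| * ∑ k, p k) := by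
      calc (s * a j) * (dotProduct (star y) z).re
          ≤ |(s * a j) * (dotProduct (star y) z).re| := le_abs_self _
        _ = |s| * |a j| * |(dotProduct (star y) z).re| := by
            rw [abs_mul, abs_mul]
        _ = |a j| * |(dotProduct (star y) z).re| := by rw [habs_s, one_mul]
        _ ≤ |a j| * ‖dotProduct (star y) z‖ :=
            mul_le_mul_of_nonneg_left (Complex.abs_re_le_norm _) (abs_nonneg _)
        _ ≤ |a j| * (|c| * ∑ k, p k) :=
            mul_le_mul_of_nonneg_left habsb (abs_nonneg _)
        _ = (-(a j)) * (|c| * ∑ k, p k) := by rw [abs_of_nonpos haj]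
    have hexp : ∑ k, (a k + a j) * p k = (∑ k, a k * p k) + a j * ∑ k, p k := by
      rw [Finset.mul_sum, ← Finset.sum_add_distrib]
      exact Finset.sum_congr rfl fun k _ => by ring
    have hQ : |c| * (∑ k, (a k + a j) * p k) ≤ (dotProduct (star y) (G *ᵥ y)).re := by
      rw [hre, hexp, hsc]
      nlinarith [hb]
    have htermnn : ∀ k : Fin d, 0 ≤ (a k + a j) * p k := by
      intro k
      by_cases hk : k = j
      · subst hk; simp [hpj]
      · exact mul_nonneg (by linarith [hklt k hk]) (hpnn k)
    have hQnn : 0 ≤ ∑ k, (a k + a j) * p k := Finset.sum_nonneg fun k _ => htermnn k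
    have hcabs : 0 < |c| := abs_pos.mpr hcne
    constructor
    · exact le_trans (mul_nonneg (abs_nonneg c) hQnn) hQ
    · intro hQ0
      have hle : |c| * (∑ k, (a k + a j) * p k) ≤ 0 := by rw [← hQ0]; exact hQ
      have hsum0 : ∑ k, (a k + a j) * p k = 0 := by
        rcases hQnn.lt_or_eq with h | h
        · exact absurd hle (not_le.mpr (mul_pos hcabs h))
        · exact h.symm
      have hallz := (Finset.sum_eq_zero_iff_of_nonneg fun k _ => htermnn k).mp hsum0
      funext k
      by_cases hk : k = j
      · subst hk; exact hyj
      · have h10 := hallz k (Finset.mem_univ k)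
        rcases mul_eq_zero.mp h10 with h' | h'
        · exfalso; have := hklt k hk; linarith
        · exact Complex.normSq_eq_zero.mp h'
  -- reduce arbitrary vectors to vectors vanishing at j
  have hinv : ∀ x : Fin d → ℂ, dotProduct (star x) (G *ᵥ x)
      = dotProduct (star (Function.update x j 0)) (G *ᵥ Function.update x j 0) := by
    intro x
    have hmv : G *ᵥ Function.update x j 0 = G *ᵥ x := by
      funext k
      simp only [Matrix.mulVec, dotProduct]
      refine Finset.sum_congr rfl fun l _ => ?_
      by_cases hl : l = j
      · subst hl; rw [hGcolj k]; simp
      · rw [Function.update_of_ne hl]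
    rw [hmv, dotProduct, dotProduct]
    have hGyj : (G *ᵥ x) j = 0 := by
      simp only [Matrix.mulVec, dotProduct]
      exact Finset.sum_eq_zero fun l _ => by rw [hGrowj l, zero_mul]
    refine Finset.sum_congr rfl fun k _ => ?_
    by_cases hk : k = j
    · subst hk; rw [hGyj, mul_zero, mul_zero]
    · simp [Pi.star_apply, Function.update_of_ne hk]
  have key2 : ∀ x : Fin d → ℂ, 0 ≤ (dotProduct (star x) (G *ᵥ x)).re ∧
      ((dotProduct (star x) (G *ᵥ x)).re = 0 → ∀ k, k ≠ j → x k = 0) := by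
    intro x
    have h := key (Function.update x j 0) (Function.update_self j 0 x)
    rw [hinv x]
    refine ⟨h.1, fun h0 k hk => ?_⟩
    have h11 := h.2 h0
    have h12 := congrFun h11 k
    rwa [Function.update_of_ne hk] at h12
  -- trace contradiction
  obtain ⟨X, hXσ⟩ : ∃ X : Matrix (Fin d) (Fin d) ℂ, σ = Xᴴ * X := by
    open MatrixOrder in
    obtain ⟨B, hB⟩ := CStarAlgebra.nonneg_iff_eq_star_mul_self.mp hσ.nonneg
    exact ⟨B, hB⟩
  have htG : (G * σ).trace = 0 := by
    rw [hGdef, Matrix.sub_mul, Matrix.trace_sub, Matrix.smul_mul, Matrix.smul_mul,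
      Matrix.trace_smul, Matrix.trace_smul, ht1, ht2]
    simp
  have htG2 : (X * G * Xᴴ).trace = 0 := by
    rw [Matrix.trace_mul_cycle, ← hXσ, Matrix.trace_mul_comm, htG]
  have hqf : ∀ m, (X * G * Xᴴ) m m
      = dotProduct (star (fun k => star (X m k))) (G *ᵥ (fun k => star (X m k))) := by
    intro m
    simp only [Matrix.mul_apply, Matrix.conjTranspose_apply, dotProduct, Matrix.mulVec,
      Pi.star_apply, star_star, Finset.sum_mul, Finset.mul_sum]
    rw [Finset.sum_comm]
    exact Finset.sum_congr rfl fun k _ => Finset.sum_congr rfl fun l _ => by ring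
  have hre0 : ∑ m, ((X * G * Xᴴ) m m).re = 0 := by
    have h := congrArg Complex.re htG2
    rw [Matrix.trace] at h
    simpa [Complex.re_sum, Matrix.diag] using h
  have hXmk : ∀ m k, k ≠ j → X m k = 0 := by
    have hall : ∀ m ∈ Finset.univ, ((X * G * Xᴴ) m m).re = 0 := by
      refine (Finset.sum_eq_zero_iff_of_nonneg fun m _ => ?_).mp hre0
      rw [hqf m]
      exact (key2 _).1
    intro m k hk
    have h := (key2 (fun k => star (X m k))).2 (by rw [← hqf m]; exact hall m (Finset.mem_univ m)) k hk
    exact star_eq_zero.mp h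
  have hσoff : ∀ l k, l ≠ j ∨ k ≠ j → σ l k = 0 := by
    intro l k hlk
    rw [hXσ, Matrix.mul_apply]
    refine Finset.sum_eq_zero fun m _ => ?_
    rcases hlk with h | h
    · rw [Matrix.conjTranspose_apply, hXmk m l h, star_zero, zero_mul]
    · rw [hXmk m k h, mul_zero]
  have hfinal : (C * σ).trace = (c : ℂ) * ((q j : ℝ) : ℂ) := by
    have h1 : ∀ k, (C * σ) k k = C k j * σ j k := by
      intro k
      rw [Matrix.mul_apply]
      refine Finset.sum_eq_single j (fun l _ hl => ?_) (by simp)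
      rw [hσoff l k (Or.inl hl), mul_zero]
    have h2 : ∑ k, (C * σ) k k = C j j * σ j j := by
      rw [Finset.sum_congr rfl fun k _ => h1 k]
      refine Finset.sum_eq_single j (fun k _ hk => ?_) (by simp)
      rw [hσoff j k (Or.inr hk), mul_zero]
    have h3 : (C * σ).trace = ∑ k, (C * σ) k k := by simp [Matrix.trace, Matrix.diag]
    rw [h3, h2, hCjj, (hσdiag j).1]
  rw [ht2] at hfinal
  have h4 : c * q j = 0 := by exact_mod_cast hfinal.symm
  rcases mul_eq_zero.mp h4 with h | h
  · exact hcne h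
  · exact absurd h hqj.ne'

theorem stmt6 (d : ℕ) (U E : Matrix (Fin d) (Fin d) ℂ)
    (hU : U ∈ Matrix.unitaryGroup (Fin d) ℂ)
    (hE : E ∈ Matrix.unitaryGroup (Fin d) ℂ) (hEdiag : E.IsDiag)
    (hpos : ∀ i, ((U * E) i i).im = 0 ∧ 0 ≤ ((U * E) i i).re)
    (ρ : Matrix (Fin d) (Fin d) ℂ) (hρ : ρ.PosSemidef) (hρtr : ρ.trace = 1)
    (hdiag : ∀ i, (Uᴴ * ρ) i i = 0) :
    ((U * E).trace).re ≤ (d : ℝ) - 2 := by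
  set V : Matrix (Fin d) (Fin d) ℂ := U * E with hVdef
  have hV : V ∈ Matrix.unitaryGroup (Fin d) ℂ := mul_mem hU hE
  have hVU : V * Vᴴ = 1 := by
    have h := Matrix.mem_unitaryGroup_iff.mp hV
    rwa [Matrix.star_eq_conjTranspose] at h
  have hUV : Vᴴ * V = 1 := by
    have h := Matrix.mem_unitaryGroup_iff'.mp hV
    rwa [Matrix.star_eq_conjTranspose] at h
  -- the trace of Vᴴρ vanishes
  have htrV : (Vᴴ * ρ).trace = 0 := by
    have hform : Vᴴ * ρ = Eᴴ * (Uᴴ * ρ) := by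
      rw [hVdef, Matrix.conjTranspose_mul, Matrix.mul_assoc]
    rw [hform, Matrix.trace]
    refine Finset.sum_eq_zero fun i _ => ?_
    rw [Matrix.diag_apply, Matrix.mul_apply]
    refine Finset.sum_eq_zero fun l _ => ?_
    by_cases hl : l = i
    · subst hl; rw [hdiag l, mul_zero]
    · rw [Matrix.conjTranspose_apply, hEdiag hl, star_zero, zero_mul]
  -- the Hermitian part of V and its spectral decomposition
  set A : Matrix (Fin d) (Fin d) ℂ := (2⁻¹ : ℂ) • (V + Vᴴ) with hAdef
  have hA : A.IsHermitian := by
    show Aᴴ = A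
    rw [hAdef, Matrix.conjTranspose_smul, Matrix.conjTranspose_add,
      Matrix.conjTranspose_conjTranspose]
    have h2 : star (2⁻¹ : ℂ) = (2⁻¹ : ℂ) := by norm_num
    rw [h2, add_comm]
  set W : Matrix (Fin d) (Fin d) ℂ := (hA.eigenvectorUnitary : Matrix (Fin d) (Fin d) ℂ)
    with hWdef
  have hWmem : W ∈ Matrix.unitaryGroup (Fin d) ℂ := (hA.eigenvectorUnitary).2
  have hW1 : Wᴴ * W = 1 := by
    have h := Matrix.mem_unitaryGroup_iff'.mp hWmem
    rwa [Matrix.star_eq_conjTranspose] at h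
  have hW2 : W * Wᴴ = 1 := by
    have h := Matrix.mem_unitaryGroup_iff.mp hWmem
    rwa [Matrix.star_eq_conjTranspose] at h
  set a : Fin d → ℝ := hA.eigenvalues with hadef
  set Dm : Matrix (Fin d) (Fin d) ℂ := Matrix.diagonal (fun k => (a k : ℂ)) with hDmdef
  have hspec : A = W * Dm * Wᴴ := by
    have h := hA.spectral_theorem
    rw [Unitary.conjStarAlgAut_apply, Matrix.star_eq_conjTranspose] at h
    exact h
  have hWWl : ∀ Z : Matrix (Fin d) (Fin d) ℂ, W * (Wᴴ * Z) = Z := fun Z => by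
    rw [← Matrix.mul_assoc, hW2, Matrix.one_mul]
  have hWHWl : ∀ Z : Matrix (Fin d) (Fin d) ℂ, Wᴴ * (W * Z) = Z := fun Z => by
    rw [← Matrix.mul_assoc, hW1, Matrix.one_mul]
  have hVVl : ∀ Z : Matrix (Fin d) (Fin d) ℂ, V * (Vᴴ * Z) = Z := fun Z => by
    rw [← Matrix.mul_assoc, hVU, Matrix.one_mul]
  have hVHVl : ∀ Z : Matrix (Fin d) (Fin d) ℂ, Vᴴ * (V * Z) = Z := fun Z => by
    rw [← Matrix.mul_assoc, hUV, Matrix.one_mul]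
  set B : Matrix (Fin d) (Fin d) ℂ := Wᴴ * V * W with hBdef
  have hBH : Bᴴ = Wᴴ * Vᴴ * W := by
    rw [hBdef]
    simp [Matrix.conjTranspose_mul, Matrix.mul_assoc]
  have hBU : B * Bᴴ = 1 := by
    rw [hBdef, hBH]
    simp only [Matrix.mul_assoc]
    rw [hWWl, hVVl, hW1]
  have hBHB : Bᴴ * B = 1 := by
    rw [hBdef, hBH]
    simp only [Matrix.mul_assoc]
    rw [hWWl, hVHVl, hW1]
  have hVpVH : V + Vᴴ = (2 : ℂ) • A := by
    rw [hAdef, smul_smul]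
    norm_num
  have hWAW : Wᴴ * A * W = Dm := by
    rw [hspec]
    simp only [Matrix.mul_assoc]
    rw [hW1, Matrix.mul_one, hWHWl]
  have hBplus : B + Bᴴ = (2 : ℂ) • Dm := by
    have h : Wᴴ * V * W + Wᴴ * Vᴴ * W = Wᴴ * (V + Vᴴ) * W := by
      rw [Matrix.mul_add, Matrix.add_mul]
    rw [hBdef, hBH, h, hVpVH, Matrix.mul_smul, Matrix.smul_mul, hWAW]
  have hB2 : B * B = (2 : ℂ) • (B * Dm) - 1 := by
    have h := congrArg (fun M => B * M) hBplus
    simp only [Matrix.mul_add, Matrix.mul_smul] at h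
    rw [hBU] at h
    exact eq_sub_of_add_eq h
  have hB2' : B * B = (2 : ℂ) • (Dm * B) - 1 := by
    have h := congrArg (fun M => M * B) hBplus
    simp only [Matrix.add_mul, Matrix.smul_mul] at h
    rw [hBHB] at h
    exact eq_sub_of_add_eq h
  have hcomm : B * Dm = Dm * B := by
    have h : (2 : ℂ) • (B * Dm) = (2 : ℂ) • (Dm * B) := sub_left_inj.mp (hB2.symm.trans hB2')
    have h2 : ((2 : ℂ)⁻¹ * 2) • (B * Dm) = ((2 : ℂ)⁻¹ * 2) • (Dm * B) := by
      rw [← smul_smul, ← smul_smul, h]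
    norm_num at h2
    exact h2
  -- the skew part
  set Cm : Matrix (Fin d) (Fin d) ℂ := (-Complex.I) • (B - Dm) with hCmdef
  have hDmH : Dmᴴ = Dm := by
    rw [hDmdef, Matrix.diagonal_conjTranspose]
    have hstar : (star fun k => ((a k : ℂ))) = fun k => ((a k : ℂ)) := by
      funext k
      rw [Pi.star_apply, Complex.star_def, Complex.conj_ofReal]
    rw [hstar]
  have hBHval : Bᴴ = (2 : ℂ) • Dm - B := eq_sub_of_add_eq (by rw [add_comm]; exact hBplus)
  have hCmH : Cmᴴ = Cm := by
    rw [hCmdef, Matrix.conjTranspose_smul, Matrix.conjTranspose_sub, hDmH, hBHval]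
    rw [star_neg, Complex.star_def, Complex.conj_I, neg_neg]
    have h : (2 : ℂ) • Dm - B - Dm = -(B - Dm) := by
      rw [two_smul]; abel
    rw [h, smul_neg, ← neg_smul]
  have hB2'' : B * B = B * Dm + Dm * B - 1 := by
    rw [hB2, two_smul, hcomm]
  have hBD2 : (B - Dm) * (B - Dm) = Dm * Dm - 1 := by
    rw [Matrix.sub_mul, Matrix.mul_sub, Matrix.mul_sub, hB2'', hcomm]
    abel
  have hCm2 : Cm * Cm = 1 - Dm * Dm := by
    rw [hCmdef, Matrix.smul_mul, Matrix.mul_smul, hBD2, smul_smul, neg_mul_neg,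
      Complex.I_mul_I, neg_one_smul, neg_sub]
  have hCmD : Cm * Dm = Dm * Cm := by
    rw [hCmdef, Matrix.smul_mul, Matrix.mul_smul]
    congr 1
    rw [Matrix.sub_mul, Matrix.mul_sub, hcomm]
  -- the conjugated state
  set σm : Matrix (Fin d) (Fin d) ℂ := Wᴴ * ρ * W with hσmdef
  have hσP : σm.PosSemidef := hρ.conjTranspose_mul_mul_same W
  have hσmtr : σm.trace = 1 := by
    rw [hσmdef, Matrix.trace_mul_cycle, hW2, Matrix.one_mul, hρtr]
  have hBσ : (Bᴴ * σm).trace = 0 := by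
    have h : Bᴴ * σm = Wᴴ * ((Vᴴ * ρ) * W) := by
      rw [hBH, hσmdef]
      simp only [Matrix.mul_assoc]
      rw [hWWl]
    rw [h, Matrix.trace_mul_comm, Matrix.mul_assoc, hW2, Matrix.mul_one, htrV]
  have hBHd : Bᴴ = Dm - Complex.I • Cm := by
    rw [hBHval, hCmdef, smul_smul]
    have hII : Complex.I * (-Complex.I) = 1 := by rw [mul_neg, Complex.I_mul_I, neg_neg]
    rw [hII, one_smul, two_smul]
    abel
  have hsplitσ : (Dm * σm).trace - Complex.I * (Cm * σm).trace = 0 := by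
    have h : (Dm - Complex.I • Cm) * σm = Dm * σm - Complex.I • (Cm * σm) := by
      rw [Matrix.sub_mul, Matrix.smul_mul]
    have e : Complex.I * (Cm * σm).trace = (Complex.I • (Cm * σm)).trace := by
      rw [Matrix.trace_smul, smul_eq_mul]
    rw [e, ← Matrix.trace_sub, ← h, ← hBHd, hBσ]
  have hreal : ∀ M : Matrix (Fin d) (Fin d) ℂ, Mᴴ = M → ((M * σm).trace).im = 0 := by
    intro M hM
    have h : (starRingEnd ℂ) ((M * σm).trace) = (M * σm).trace := by
      have h1 : star ((M * σm).trace) = ((M * σm)ᴴ).trace := (Matrix.trace_conjTranspose _).symm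
      rw [Complex.star_def] at h1
      rw [h1, Matrix.conjTranspose_mul, hM, hσP.isHermitian, Matrix.trace_mul_comm]
    exact Complex.conj_eq_iff_im.mp h
  have him1 : ((Dm * σm).trace).im = 0 := hreal Dm hDmH
  have him2 : ((Cm * σm).trace).im = 0 := hreal Cm hCmH
  have h1 := congrArg Complex.re hsplitσ
  have h2 := congrArg Complex.im hsplitσ
  simp only [Complex.sub_re, Complex.sub_im, Complex.mul_re, Complex.mul_im,
    Complex.I_re, Complex.I_im, Complex.zero_re, Complex.zero_im] at h1 h2
  rw [him2] at h1
  rw [him1] at h2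
  have ht1 : (Dm * σm).trace = 0 := by
    apply Complex.ext
    · simp only [Complex.zero_re]; linarith
    · simp only [Complex.zero_im]; exact him1
  have ht2 : (Cm * σm).trace = 0 := by
    apply Complex.ext
    · simp only [Complex.zero_re]; linarith
    · simp only [Complex.zero_im]; exact him2
  -- apply the core lemma
  have hcore := stmt6_core d a Cm σm hCmH hCm2 hCmD hσP hσmtr ht1 ht2
  -- convert the goal
  have htrVB : (U * E).trace = B.trace := by
    have hVB : V = W * B * Wᴴ := by
      rw [hBdef]
      simp only [Matrix.mul_assoc]
      rw [hW2, Matrix.mul_one, hWWl]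
    rw [← hVdef, hVB, Matrix.trace_mul_cycle, hW1, Matrix.one_mul]
  have hBdm : B = Dm + Complex.I • Cm := by
    rw [hCmdef, smul_smul]
    have hII : Complex.I * (-Complex.I) = 1 := by rw [mul_neg, Complex.I_mul_I, neg_neg]
    rw [hII, one_smul]
    abel
  have hCmre : (Cm.trace).im = 0 := by
    have h : (starRingEnd ℂ) (Cm.trace) = Cm.trace := by
      have h1 : star (Cm.trace) = (Cmᴴ).trace := (Matrix.trace_conjTranspose _).symm
      rw [Complex.star_def] at h1
      rw [h1, hCmH]
    exact Complex.conj_eq_iff_im.mp h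
  have hDmtr : Dm.trace = ((∑ k, a k : ℝ) : ℂ) := by
    rw [hDmdef, Matrix.trace_diagonal]
    push_cast
    rfl
  have hgoal2 : ((U * E).trace).re = ∑ k, a k := by
    rw [htrVB, hBdm, Matrix.trace_add, Matrix.trace_smul, smul_eq_mul, Complex.add_re,
      hDmtr]
    simp [Complex.mul_re, hCmre]
  rw [hgoal2]
  have hsum : ∑ k, (1 - a k) = (d : ℝ) - ∑ k, a k := by
    rw [Finset.sum_sub_distrib, Finset.sum_const, Finset.card_univ, Fintype.card_fin]
    simp
  rw [hsum] at hcore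
  linarith
end

section
/- Let x ∈ ℂ^d be a unit vector with max_i |x_i|² ≤ 1/2. Then there exists a unit vector y ∈ ℂ^d with |y_i| = |x_i| for all i and ⟨y|x⟩ = 0. -/
lemma sign_lemma {ι : Type*} [DecidableEq ι] (a : ι → ℝ) :
    ∀ (s : Finset ι) (b : ℝ), (∀ i ∈ s, 0 ≤ a i) → 0 ≤ b → (∀ i ∈ s, a i ≤ b) →
    ∃ ε : ι → ℝ, (∀ i, ε i = 1 ∨ ε i = -1) ∧ |∑ i ∈ s, ε i * a i| ≤ b := by
  intro s
  induction s using Finset.strongInduction with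
  | _ s ih =>
    intro b hpos hb hub
    rcases s.eq_empty_or_nonempty with rfl | hne
    · exact ⟨fun _ => 1, fun _ => Or.inl rfl, by simpa using hb⟩
    · obtain ⟨i₀, hi₀, hmax⟩ := s.exists_max_image a hne
      obtain ⟨ε, hε, ht⟩ := ih (s.erase i₀) (Finset.erase_ssubset hi₀) (a i₀)
        (fun i hi => hpos i (Finset.mem_of_mem_erase hi)) (hpos i₀ hi₀)
        (fun i hi => hmax i (Finset.mem_of_mem_erase hi))
      set t := ∑ i ∈ s.erase i₀, ε i * a i with htdef
      set σ : ℝ := if 0 ≤ t then -1 else 1 with hσ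
      refine ⟨Function.update ε i₀ σ, ?_, ?_⟩
      · intro i
        by_cases h : i = i₀
        · subst h; simp only [Function.update_self, hσ]
          split <;> simp
        · simpa [Function.update_of_ne h] using hε i
      · rw [← Finset.add_sum_erase _ _ hi₀]
        have hsum : ∑ i ∈ s.erase i₀, Function.update ε i₀ σ i * a i = t := by
          refine Finset.sum_congr rfl (fun i hi => ?_)
          rw [Function.update_of_ne (Finset.ne_of_mem_erase hi)]
        rw [hsum, Function.update_self]
        have h0 : 0 ≤ a i₀ := hpos i₀ hi₀
        have hbb : a i₀ ≤ b := hub i₀ hi₀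
        rw [abs_le] at ht ⊢
        constructor <;> rw [hσ] <;> split <;> nlinarith [ht.1, ht.2]

lemma triangle_lemma (M P Q : ℝ) (hM : 0 ≤ M) (hP : 0 ≤ P) (hQ : 0 ≤ Q)
    (h1 : |M - P| ≤ Q) (h2 : Q ≤ M + P) :
    ∃ u w : ℂ, ‖u‖ = 1 ∧ ‖w‖ = 1 ∧
      (M : ℂ) + P * u + Q * w = 0 := by
  set g : ℝ → ℝ := fun φ => ‖(M : ℂ) + P * Complex.exp (φ * Complex.I)‖ with hg
  have hcont : ContinuousOn g (Set.Icc 0 Real.pi) := by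
    apply Continuous.continuousOn
    continuity
  have hg0 : g 0 = M + P := by
    simp [hg]
    rw [← Complex.ofReal_add, Complex.norm_real, Real.norm_eq_abs]
    exact abs_of_nonneg (by linarith)
  have hgpi : g Real.pi = |M - P| := by
    simp [hg, Complex.exp_pi_mul_I]
    rw [show (M:ℂ) + -(P:ℂ) = ((M - P : ℝ) : ℂ) by push_cast; ring, Complex.norm_real, Real.norm_eq_abs]
  have hmem : Q ∈ Set.Icc (g Real.pi) (g 0) := by
    rw [hg0, hgpi]; exact ⟨h1, h2⟩
  obtain ⟨φ, _, hφ⟩ := intermediate_value_Icc' Real.pi_pos.le hcont hmem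
  set u : ℂ := Complex.exp (φ * Complex.I) with hu
  have hu1 : ‖u‖ = 1 := Complex.norm_exp_ofReal_mul_I φ
  set z : ℂ := (M : ℂ) + P * u with hz
  have hzabs : ‖z‖ = Q := hφ
  by_cases hz0 : z = 0
  · refine ⟨u, 1, hu1, by simp, ?_⟩
    have : Q = 0 := by rw [← hzabs, hz0]; simp
    rw [this]; simpa [hz0] using hz.symm
  · have hQ0 : Q ≠ 0 := by
      intro h; rw [h] at hzabs
      exact hz0 (norm_eq_zero.mp hzabs)
    refine ⟨u, -(z / Q), hu1, ?_, ?_⟩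
    · rw [norm_neg, norm_div, hzabs, Complex.norm_real, Real.norm_eq_abs, abs_of_nonneg hQ]
      field_simp
    · have : (Q : ℂ) ≠ 0 := Complex.ofReal_ne_zero.mpr hQ0
      field_simp
      linear_combination (Q:ℂ) * hz

open Matrix

theorem stmt10 (d : ℕ) (x : Fin d → ℂ)
    (hx : ∑ i, ‖x i‖ ^ 2 = 1)
    (hmax : ∀ i, ‖x i‖ ^ 2 ≤ 1 / 2) :
    ∃ y : Fin d → ℂ, (∀ i, ‖y i‖ = ‖x i‖) ∧
      ∑ i, (starRingEnd ℂ) (y i) * x i = 0 := by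
  set a : Fin d → ℝ := fun i => ‖x i‖ ^ 2 with ha
  have hapos : ∀ i, 0 ≤ a i := fun i => sq_nonneg _
  -- d ≠ 0
  rcases Nat.eq_zero_or_pos d with rfl | hd
  · simp at hx
  have : Nonempty (Fin d) := ⟨⟨0, hd⟩⟩
  -- maximal index
  obtain ⟨i₀, hi₀, hmx⟩ := Finset.exists_max_image Finset.univ a Finset.univ_nonempty
  set M : ℝ := a i₀ with hM
  have hM0 : 0 ≤ M := hapos i₀
  have hMhalf : M ≤ 1 / 2 := hmax i₀
  -- signing on the rest
  obtain ⟨ε, hε, ht⟩ := sign_lemma a (Finset.univ.erase i₀) M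
    (fun i _ => hapos i) hM0 (fun i _ => hmx i (Finset.mem_univ i))
  set s₁ := (Finset.univ.erase i₀).filter (fun i => ε i = 1) with hs₁
  set s₂ := (Finset.univ.erase i₀).filter (fun i => ¬ ε i = 1) with hs₂
  set P := ∑ i ∈ s₁, a i with hPdef
  set Q := ∑ i ∈ s₂, a i with hQdef
  have hP0 : 0 ≤ P := Finset.sum_nonneg (fun i _ => hapos i)
  have hQ0 : 0 ≤ Q := Finset.sum_nonneg (fun i _ => hapos i)
  have htPQ : ∑ i ∈ Finset.univ.erase i₀, ε i * a i = P - Q := by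
    rw [← Finset.sum_filter_add_sum_filter_not (Finset.univ.erase i₀) (fun i => ε i = 1)]
    rw [hPdef, hQdef, sub_eq_add_neg, ← Finset.sum_neg_distrib]
    congr 1
    · exact Finset.sum_congr rfl (fun i hi => by
        rw [(Finset.mem_filter.mp hi).2, one_mul])
    · exact Finset.sum_congr rfl (fun i hi => by
        have := (hε i).resolve_left (Finset.mem_filter.mp hi).2
        rw [this]; ring)
  have hPQsum : M + (P + Q) = 1 := by
    rw [hPdef, hQdef, Finset.sum_filter_add_sum_filter_not]
    rw [hM, Finset.add_sum_erase _ _ (Finset.mem_univ i₀)]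
    exact hx
  rw [htPQ] at ht
  -- triangle inequalities
  have h1 : |M - P| ≤ Q := by
    rw [abs_le] at ht ⊢
    constructor <;> [linarith; linarith]
  have h2 : Q ≤ M + P := by
    rw [abs_le] at ht; linarith
  obtain ⟨u, w, hu1, hw1, huw⟩ := triangle_lemma M P Q hM0 hP0 hQ0 h1 h2
  -- phases
  set c : Fin d → ℂ := fun i => if i = i₀ then 1 else (if ε i = 1 then u else w) with hc
  have hc1 : ∀ i, ‖c i‖ = 1 := by
    intro i; rw [hc]; dsimp only
    split
    · simp
    · split
      · exact hu1
      · exact hw1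
  refine ⟨fun i => x i * (starRingEnd ℂ) (c i), ?_, ?_⟩
  · intro i
    rw [norm_mul, Complex.norm_conj, hc1, mul_one]
  · have key : ∀ i, (starRingEnd ℂ) (x i * (starRingEnd ℂ) (c i)) * x i
        = (a i : ℂ) * c i := by
      intro i
      rw [_root_.map_mul, RingHomCompTriple.comp_apply, RingHom.id_apply]
      have : (starRingEnd ℂ) (x i) * x i = ((a i : ℝ) : ℂ) := by
        rw [Complex.conj_mul', ha]
        push_cast
        rfl
      calc (starRingEnd ℂ) (x i) * c i * x i
          = (starRingEnd ℂ) (x i) * x i * c i := by ring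
        _ = (a i : ℂ) * c i := by rw [this]
    simp_rw [key]
    rw [← Finset.add_sum_erase _ _ (Finset.mem_univ i₀),
      ← Finset.sum_filter_add_sum_filter_not (Finset.univ.erase i₀) (fun i => ε i = 1)]
    have e0 : (a i₀ : ℂ) * c i₀ = (M : ℂ) := by
      rw [hc]; simp [hM]
    have e1 : ∑ i ∈ s₁, (a i : ℂ) * c i = (P : ℂ) * u := by
      rw [hPdef]; push_cast
      rw [Finset.sum_mul]
      refine Finset.sum_congr rfl (fun i hi => ?_)
      have h1 := (Finset.mem_filter.mp hi).2
      have h2 := Finset.ne_of_mem_erase (Finset.mem_filter.mp hi).1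
      rw [hc]; simp [h1, h2]
    have e2 : ∑ i ∈ s₂, (a i : ℂ) * c i = (Q : ℂ) * w := by
      rw [hQdef]; push_cast
      rw [Finset.sum_mul]
      refine Finset.sum_congr rfl (fun i hi => ?_)
      have h1 := (Finset.mem_filter.mp hi).2
      have h2 := Finset.ne_of_mem_erase (Finset.mem_filter.mp hi).1
      rw [hc]; simp [h1, h2]
    rw [e0, e1, e2]
    linear_combination huw
end

section
/- Let U = I − 2|x⟩⟨x| be a reflection for a unit vector x ∈ ℂ^d with max_i |x_i|² ≤ 1/2. Then there exists a density matrix ρ of rank at most 2 such that diag(U†ρ) = 0. -/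
open Matrix
open scoped ComplexOrder

section AuxLemmas
open Complex Finset


lemma triangle_aux (a b c : ℝ) (ha : 0 ≤ a) (hb : 0 ≤ b) (hc : 0 ≤ c)
    (h1 : a ≤ b + c) (h2 : b ≤ a + c) (h3 : c ≤ a + b) :
    ∃ u v : ℂ, ‖u‖ = 1 ∧ ‖v‖ = 1 ∧ (a:ℂ) + b*u + c*v = 0 := by
  rcases eq_or_lt_of_le hc with hc0 | hcpos
  · obtain rfl : c = 0 := hc0.symm
    obtain rfl : a = b := le_antisymm (by linarith) (by linarith)
    exact ⟨-1, 1, by simp, by simp, by push_cast; ring⟩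
  rcases eq_or_lt_of_le hb with hb0 | hbpos
  · obtain rfl : b = 0 := hb0.symm
    obtain rfl : a = c := le_antisymm (by linarith) (by linarith)
    exact ⟨1, -1, by simp, by simp, by push_cast; ring⟩
  rcases eq_or_lt_of_le ha with ha0 | hapos
  · obtain rfl : a = 0 := ha0.symm
    obtain rfl : b = c := le_antisymm (by linarith) (by linarith)
    exact ⟨1, -1, by simp, by simp, by push_cast; ring⟩
  · set t : ℝ := (c^2 - a^2 - b^2)/(2*a*b) with ht
    have h2ab : 0 < 2*a*b := by positivity
    have ht1 : t ≤ 1 := by rw [ht, div_le_one h2ab]; nlinarith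
    have ht2 : -1 ≤ t := by rw [ht, le_div_iff₀ h2ab]; nlinarith
    have hs0 : 0 ≤ 1 - t^2 := by nlinarith
    set s : ℝ := Real.sqrt (1 - t^2) with hsdef
    have hs2 : s^2 = 1 - t^2 := Real.sq_sqrt hs0
    have habt : 2*a*b*t = c^2 - a^2 - b^2 := by
      rw [ht]; field_simp
    have hns : Complex.normSq ((a:ℂ) + (b:ℂ) * ⟨t, s⟩) = c^2 := by
      simp [Complex.normSq_apply, Complex.add_re, Complex.add_im, Complex.mul_re,
        Complex.mul_im]
      nlinarith [hs2, habt]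
    have habs : ‖(a:ℂ) + (b:ℂ) * ⟨t, s⟩‖ = c := by
      rw [Complex.norm_def, hns]
      exact Real.sqrt_sq hc
    have hcne : (c:ℂ) ≠ 0 := by exact_mod_cast hcpos.ne'
    refine ⟨⟨t, s⟩, -((a:ℂ) + b * ⟨t, s⟩)/c, ?_, ?_, ?_⟩
    · rw [Complex.norm_def, Complex.normSq_mk]
      have : t*t + s*s = 1 := by nlinarith [hs2]
      rw [this, Real.sqrt_one]
    · rw [norm_div, norm_neg, habs, Complex.norm_of_nonneg hc,
        div_self hcpos.ne']
    · field_simp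
      ring

lemma exists_orth_aux (d : ℕ) (x : Fin d → ℂ)
    (hx : ∑ i, ‖x i‖ ^ 2 = 1)
    (hmax : ∀ i, ‖x i‖ ^ 2 ≤ 1 / 2) :
    ∃ y : Fin d → ℂ, (∀ i, Complex.normSq (y i) = Complex.normSq (x i)) ∧
      ∑ i, (starRingEnd ℂ) (y i) * x i = 0 := by
  classical
  set w : Fin d → ℝ := fun i => ‖x i‖ ^ 2 with hw
  have hwnn : ∀ i, 0 ≤ w i := fun i => by positivity
  set F : ℕ → ℝ := fun n => ∑ i ∈ Finset.univ.filter (fun i : Fin d => (i:ℕ) < n), w i with hF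
  have hd : 0 < d := by
    rcases Nat.eq_zero_or_pos d with h | h
    · subst h; simp at hx
    · exact h
  have hFd : F d = 1 := by
    rw [hF]
    simp only
    rw [Finset.filter_true_of_mem (fun i _ => i.isLt)]
    exact hx
  have hex : ∃ n, 1/2 ≤ F (n + 1) := ⟨d - 1, by rw [Nat.sub_add_cancel hd, hFd]; norm_num⟩
  set m := Nat.find hex with hmdef
  have hm : 1/2 ≤ F (m + 1) := Nat.find_spec hex
  have hmlt : m < d := by
    have := Nat.find_min' hex (by rw [Nat.sub_add_cancel hd, hFd]; norm_num : 1/2 ≤ F (d - 1 + 1))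
    omega
  set m' : Fin d := ⟨m, hmlt⟩ with hm'
  have haF : F m ≤ 1/2 := by
    rcases Nat.eq_zero_or_pos m with h | h
    · rw [h]; simp [hF]
    · have := Nat.find_min hex (show m - 1 < m by omega)
      rw [show m - 1 + 1 = m by omega] at this
      linarith [not_le.mp this]
  set a : ℝ := F m with hadef
  set c : ℝ := w m' with hcdef
  set b : ℝ := ∑ i ∈ Finset.univ.filter (fun i : Fin d => m < (i:ℕ)), w i with hbdef
  have hann : 0 ≤ a := Finset.sum_nonneg fun i _ => hwnn i
  have hbnn : 0 ≤ b := Finset.sum_nonneg fun i _ => hwnn i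
  have hcnn : 0 ≤ c := hwnn m'
  have hc12 : c ≤ 1/2 := hmax m'
  have hins : Finset.univ.filter (fun i : Fin d => (i:ℕ) < m + 1) =
      insert m' (Finset.univ.filter (fun i : Fin d => (i:ℕ) < m)) := by
    ext i
    simp [hm', Fin.ext_iff]
    omega
  have hnotmem : m' ∉ Finset.univ.filter (fun i : Fin d => (i:ℕ) < m) := by simp [hm']
  have hFm1 : F (m + 1) = c + a := by
    rw [hF]; simp only; rw [hins, Finset.sum_insert hnotmem]
  have hsplit : Finset.univ.filter (fun i : Fin d => ¬ (i:ℕ) < m) =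
      insert m' (Finset.univ.filter (fun i : Fin d => m < (i:ℕ))) := by
    ext i
    simp [hm', Fin.ext_iff]
    omega
  have hnotmem2 : m' ∉ Finset.univ.filter (fun i : Fin d => m < (i:ℕ)) := by simp [hm']
  have habc : a + (c + b) = 1 := by
    have h1 := Finset.sum_filter_add_sum_filter_not Finset.univ (fun i : Fin d => (i:ℕ) < m) w
    rw [hsplit, Finset.sum_insert hnotmem2] at h1
    rw [hadef, hcdef, hbdef, hF]
    simp only
    rw [h1]
    exact hx
  obtain ⟨u, v, hu, hv, heq⟩ := triangle_aux a c b hann hcnn hbnn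
    (by linarith) (by linarith) (by linarith)
  refine ⟨fun i => if (i:ℕ) < m then x i else if (i:ℕ) = m then (starRingEnd ℂ) u * x i
      else (starRingEnd ℂ) v * x i, ?_, ?_⟩
  · intro i
    have hnu : Complex.normSq u = 1 := by rw [Complex.normSq_eq_norm_sq, hu]; norm_num
    have hnv : Complex.normSq v = 1 := by rw [Complex.normSq_eq_norm_sq, hv]; norm_num
    dsimp only
    split_ifs <;> simp [Complex.normSq_mul, hnu, hnv]
  · have key : ∀ i : Fin d, (starRingEnd ℂ)
        (if (i:ℕ) < m then x i else if (i:ℕ) = m then (starRingEnd ℂ) u * x i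
          else (starRingEnd ℂ) v * x i) * x i =
        (if (i:ℕ) < m then ((w i : ℝ) : ℂ) else if (i:ℕ) = m then u * ((w i : ℝ) : ℂ)
          else v * ((w i : ℝ) : ℂ)) := by
      intro i
      have hconj : (starRingEnd ℂ) (x i) * x i = ((w i : ℝ) : ℂ) := by
        show _ = ((‖x i‖ ^ 2 : ℝ) : ℂ)
        rw [← Complex.normSq_eq_conj_mul_self, Complex.normSq_eq_norm_sq]
      split_ifs <;>
        first
          | exact hconj
          | (simp only [_root_.map_mul, Complex.conj_conj, mul_assoc]; rw [hconj])
    have hsum : (∑ i : Fin d, (if (i:ℕ) < m then ((w i : ℝ) : ℂ)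
        else if (i:ℕ) = m then u * ((w i : ℝ) : ℂ) else v * ((w i : ℝ) : ℂ)))
        = (a:ℂ) + (c:ℂ) * u + (b:ℂ) * v := by
      rw [← Finset.sum_filter_add_sum_filter_not Finset.univ (fun i : Fin d => (i:ℕ) < m),
        hsplit, Finset.sum_insert hnotmem2]
      have e1 : (∑ i ∈ Finset.univ.filter (fun i : Fin d => (i:ℕ) < m),
          (if (i:ℕ) < m then ((w i : ℝ) : ℂ) else if (i:ℕ) = m then u * ((w i : ℝ) : ℂ)
            else v * ((w i : ℝ) : ℂ))) = ((a : ℝ) : ℂ) := by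
        rw [Finset.sum_congr rfl (fun i hi => if_pos (Finset.mem_filter.mp hi).2), hadef, hF]
        push_cast
        rfl
      have e2 : (if (m':ℕ) < m then ((w m' : ℝ) : ℂ) else if (m':ℕ) = m then u * ((w m' : ℝ) : ℂ)
          else v * ((w m' : ℝ) : ℂ)) = u * ((c : ℝ) : ℂ) := by
        rw [if_neg (by simp [hm']), if_pos (by simp [hm'])]
      have e3 : (∑ i ∈ Finset.univ.filter (fun i : Fin d => m < (i:ℕ)),
          (if (i:ℕ) < m then ((w i : ℝ) : ℂ) else if (i:ℕ) = m then u * ((w i : ℝ) : ℂ)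
            else v * ((w i : ℝ) : ℂ))) = v * ((b : ℝ) : ℂ) := by
        rw [Finset.sum_congr rfl (fun i hi => ?_), ← Finset.mul_sum, hbdef]
        · push_cast
          rfl
        · have him := (Finset.mem_filter.mp hi).2
          rw [if_neg (by omega), if_neg (by omega)]
      rw [e1, e2, e3]
      ring
    calc (∑ i : Fin d, (starRingEnd ℂ)
          ((fun i : Fin d => if (i:ℕ) < m then x i else if (i:ℕ) = m then (starRingEnd ℂ) u * x i
            else (starRingEnd ℂ) v * x i) i) * x i)
        = ∑ i : Fin d, (if (i:ℕ) < m then ((w i : ℝ) : ℂ)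
            else if (i:ℕ) = m then u * ((w i : ℝ) : ℂ) else v * ((w i : ℝ) : ℂ)) :=
          Finset.sum_congr rfl (fun i _ => key i)
      _ = (a:ℂ) + (c:ℂ) * u + (b:ℂ) * v := hsum
      _ = 0 := heq

end AuxLemmas

theorem stmt12 (d : ℕ) (x : Fin d → ℂ)
    (hx : ∑ i, ‖x i‖ ^ 2 = 1)
    (hmax : ∀ i, ‖x i‖ ^ 2 ≤ 1 / 2)
    (U : Matrix (Fin d) (Fin d) ℂ)
    (hUdef : U = 1 - (2 : ℂ) • Matrix.vecMulVec x (star x)) :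
    ∃ ρ : Matrix (Fin d) (Fin d) ℂ, ρ.PosSemidef ∧ ρ.trace = 1 ∧ ρ.rank ≤ 2 ∧
      ∀ i, (Uᴴ * ρ) i i = 0 := by
  classical
  obtain ⟨y, hnorm, horth⟩ := exists_orth_aux d x hx hmax
  have hconjx : ∀ i, (starRingEnd ℂ) (x i) * x i = ((‖x i‖ ^ 2 : ℝ) : ℂ) := by
    intro i
    rw [← Complex.normSq_eq_conj_mul_self, Complex.normSq_eq_norm_sq]
  have S1 : ∑ j, (starRingEnd ℂ) (x j) * x j = 1 := by
    rw [Finset.sum_congr rfl fun j _ => hconjx j, ← Complex.ofReal_sum, hx, Complex.ofReal_one]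
  have S2 : ∑ j, (starRingEnd ℂ) (x j) * y j = 0 := by
    have : ∑ j, (starRingEnd ℂ) (x j) * y j
        = (starRingEnd ℂ) (∑ j, (starRingEnd ℂ) (y j) * x j) := by
      rw [map_sum]
      exact Finset.sum_congr rfl fun j _ => by rw [_root_.map_mul, Complex.conj_conj]; ring
    rw [this, horth, map_zero]
  set α : ℂ := Complex.ofReal (Real.sqrt 2)⁻¹ with hα
  have hαα : α * (starRingEnd ℂ) α = 1/2 := by
    rw [hα, Complex.conj_ofReal, ← Complex.ofReal_mul, ← mul_inv,
      Real.mul_self_sqrt (by norm_num : (0:ℝ) ≤ 2)]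
    norm_num
  set C : Matrix (Fin d) (Fin 2) ℂ :=
    Matrix.of (fun i k => if k = 0 then α * x i else α * y i) with hC
  have hρ : ∀ i j, (C * Cᴴ) i j
      = (1/2 : ℂ) * (x i * (starRingEnd ℂ) (x j) + y i * (starRingEnd ℂ) (y j)) := by
    intro i j
    rw [Matrix.mul_apply, Fin.sum_univ_two]
    have e1 : C i 0 = α * x i := rfl
    have e2 : C i 1 = α * y i := rfl
    have e3 : Cᴴ 0 j = star (α * x j) := rfl
    have e4 : Cᴴ 1 j = star (α * y j) := rfl
    rw [e1, e2, e3, e4]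
    simp only [Complex.star_def, _root_.map_mul]
    linear_combination (x i * (starRingEnd ℂ) (x j) + y i * (starRingEnd ℂ) (y j)) * hαα
  have hdiagρ : ∀ i, (C * Cᴴ) i i = ((‖x i‖ ^ 2 : ℝ) : ℂ) := by
    intro i
    rw [hρ i i]
    have h1 : x i * (starRingEnd ℂ) (x i) = ((‖x i‖ ^ 2 : ℝ) : ℂ) := by
      rw [mul_comm]; exact hconjx i
    have h2 : y i * (starRingEnd ℂ) (y i) = ((‖x i‖ ^ 2 : ℝ) : ℂ) := by
      rw [Complex.mul_conj, hnorm i, Complex.normSq_eq_norm_sq]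
    rw [h1, h2]
    ring
  refine ⟨C * Cᴴ, Matrix.posSemidef_self_mul_conjTranspose C, ?_, ?_, ?_⟩
  · rw [Matrix.trace]
    calc ∑ i, (C * Cᴴ).diag i = ∑ i, ((‖x i‖ ^ 2 : ℝ) : ℂ) :=
          Finset.sum_congr rfl fun i _ => hdiagρ i
      _ = 1 := by rw [← Complex.ofReal_sum, hx, Complex.ofReal_one]
  · calc (C * Cᴴ).rank ≤ C.rank := Matrix.rank_mul_le_left C Cᴴ
      _ ≤ Fintype.card (Fin 2) := Matrix.rank_le_card_width C
      _ = 2 := by simp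
  · intro i
    have hUH : ∀ j, Uᴴ i j = (if j = i then (1:ℂ) else 0)
        - 2 * ((starRingEnd ℂ) (x j) * x i) := by
      intro j
      rw [Matrix.conjTranspose_apply, hUdef]
      simp only [Matrix.sub_apply, Matrix.smul_apply, Matrix.one_apply,
        Matrix.vecMulVec_apply, Pi.star_apply, smul_eq_mul, star_sub, star_mul',
        star_star, star_ofNat, Complex.star_def, apply_ite (starRingEnd ℂ),
        Complex.conj_conj, _root_.map_one, map_zero]
      try ring
    have hinner : ∑ j, (starRingEnd ℂ) (x j) * (C * Cᴴ) j i
        = (1/2 : ℂ) * (starRingEnd ℂ) (x i) := by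
      calc ∑ j, (starRingEnd ℂ) (x j) * (C * Cᴴ) j i
          = ∑ j, ((1/2 : ℂ) * ((starRingEnd ℂ) (x j) * x j) * (starRingEnd ℂ) (x i)
            + (1/2 : ℂ) * ((starRingEnd ℂ) (x j) * y j) * (starRingEnd ℂ) (y i)) :=
            Finset.sum_congr rfl fun j _ => by rw [hρ j i]; ring
        _ = (1/2 : ℂ) * (∑ j, (starRingEnd ℂ) (x j) * x j) * (starRingEnd ℂ) (x i)
            + (1/2 : ℂ) * (∑ j, (starRingEnd ℂ) (x j) * y j) * (starRingEnd ℂ) (y i) := by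
            rw [Finset.sum_add_distrib]
            congr 1 <;> rw [← Finset.sum_mul, ← Finset.mul_sum]
        _ = (1/2 : ℂ) * (starRingEnd ℂ) (x i) := by rw [S1, S2]; ring
    calc (Uᴴ * (C * Cᴴ)) i i
        = ∑ j, (((if j = i then (1:ℂ) else 0) - 2 * ((starRingEnd ℂ) (x j) * x i))
            * (C * Cᴴ) j i) := by
          rw [Matrix.mul_apply]
          exact Finset.sum_congr rfl fun j _ => by rw [hUH j]
      _ = ∑ j, ((if j = i then (C * Cᴴ) j i else 0)
            - 2 * x i * ((starRingEnd ℂ) (x j) * (C * Cᴴ) j i)) := by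
          refine Finset.sum_congr rfl fun j _ => ?_
          split_ifs <;> ring
      _ = (C * Cᴴ) i i - 2 * x i * ∑ j, (starRingEnd ℂ) (x j) * (C * Cᴴ) j i := by
          rw [Finset.sum_sub_distrib, Finset.sum_ite_eq' Finset.univ i
            (fun j => (C * Cᴴ) j i), if_pos (Finset.mem_univ i), ← Finset.mul_sum]
      _ = 0 := by
          rw [hinner, hdiagρ i]
          have h1 : x i * (starRingEnd ℂ) (x i) = ((‖x i‖ ^ 2 : ℝ) : ℂ) := by
            rw [mul_comm]; exact hconjx i
          linear_combination -h1
end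

section
/- Let x ∈ ℂ^d be a unit vector and U = I − 2|x⟩⟨x|. There exists a unit vector ψ ∈ ℂ^d (a rank-one density matrix) with diag(U† |ψ⟩⟨ψ|) = 0 if and only if there exists a subset Δ ⊆ {1,...,d} with ∑_{i∈Δ} |x_i|² = 1/2. -/
open Matrix

theorem stmt13 (d : ℕ) (x : Fin d → ℂ)
    (hx : ∑ i, ‖x i‖ ^ 2 = 1)
    (U : Matrix (Fin d) (Fin d) ℂ)
    (hUdef : U = 1 - (2 : ℂ) • Matrix.vecMulVec x (star x)) :
    (∃ ψ : Fin d → ℂ, star ψ ⬝ᵥ ψ = 1 ∧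
        ∀ i, (Uᴴ * Matrix.vecMulVec ψ (star ψ)) i i = 0)
      ↔ (∃ Δ : Finset (Fin d), ∑ i ∈ Δ, ‖x i‖ ^ 2 = 1 / 2) := by
  have hdiag : ∀ (ψ : Fin d → ℂ) (i : Fin d),
      (Uᴴ * Matrix.vecMulVec ψ (star ψ)) i i
        = (ψ i - 2 * (∑ j, (starRingEnd ℂ) (x j) * ψ j) * x i) * (starRingEnd ℂ) (ψ i) := by
    intro ψ i
    subst hUdef
    simp only [Matrix.mul_apply, Matrix.vecMulVec_apply, Matrix.conjTranspose_apply,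
      Matrix.sub_apply, Matrix.smul_apply, Matrix.one_apply, Pi.star_apply, star_sub,
      star_smul, smul_eq_mul, star_mul', RCLike.star_def, starRingEnd_self_apply]
    have : ∀ j : Fin d,
        ((starRingEnd ℂ) (if j = i then (1:ℂ) else 0) - (starRingEnd ℂ) 2 * ((starRingEnd ℂ) (x j) * x i)) *
          (ψ j * (starRingEnd ℂ) (ψ i))
        = (if j = i then ψ i * (starRingEnd ℂ) (ψ i) else 0)
          - 2 * ((starRingEnd ℂ) (x j) * ψ j) * x i * (starRingEnd ℂ) (ψ i) := by
      intro j
      by_cases h : j = i <;> simp [h, map_ofNat] <;> ring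
    rw [Finset.sum_congr rfl (fun j _ => this j), Finset.sum_sub_distrib]
    simp [Finset.sum_ite_eq, ← Finset.sum_mul, ← Finset.mul_sum]
    ring
  constructor
  · rintro ⟨ψ, hnorm, hcond⟩
    set c : ℂ := ∑ j, (starRingEnd ℂ) (x j) * ψ j with hc
    have hcond' : ∀ i, (ψ i - 2 * c * x i) * (starRingEnd ℂ) (ψ i) = 0 := by
      intro i; rw [← hdiag ψ i]; exact hcond i
    -- normalization in ℝ
    have hnorm' : ∑ i, ‖ψ i‖ ^ 2 = 1 := by
      have h1 : (↑(∑ i, ‖ψ i‖ ^ 2) : ℂ) = 1 := by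
        push_cast
        rw [← hnorm]
        simp [dotProduct, ← Complex.normSq_eq_norm_sq, ← Complex.mul_conj']
        exact Finset.sum_congr rfl fun i _ => by rw [mul_comm]
      exact_mod_cast h1
    -- sum identity gives 2 |c|^2 = 1
    have hcc : 2 * c * (starRingEnd ℂ) c = 1 := by
      have h2 : ∑ i, ψ i * (starRingEnd ℂ) (ψ i) = ∑ i, 2 * c * x i * (starRingEnd ℂ) (ψ i) := by
        refine Finset.sum_congr rfl fun i _ => ?_
        linear_combination hcond' i
      have h3 : ∑ i, ψ i * (starRingEnd ℂ) (ψ i) = 1 := by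
        rw [← hnorm]; simp [dotProduct, mul_comm]
      have h4 : (starRingEnd ℂ) c = ∑ i, x i * (starRingEnd ℂ) (ψ i) := by
        rw [hc, map_sum]; exact Finset.sum_congr rfl fun i _ => by simp [mul_comm]
      rw [h4, Finset.mul_sum]
      rw [← h3, h2]
      exact Finset.sum_congr rfl fun i _ => by ring
    have hcabs : ‖c‖ ^ 2 = 1 / 2 := by
      have hn : ((Complex.normSq c : ℝ) : ℂ) = 1 / 2 := by
        rw [← Complex.mul_conj]; linear_combination hcc / 2
      have hn' : Complex.normSq c = 1 / 2 := by
        have h2 : ((Complex.normSq c : ℝ) : ℂ) = (((1 / 2 : ℝ) : ℝ) : ℂ) := by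
          rw [hn]; norm_num
        exact_mod_cast h2
      rw [Complex.sq_norm, hn']
    refine ⟨Finset.univ.filter (fun i => ψ i ≠ 0), ?_⟩
    have hmem : ∀ i ∈ Finset.univ.filter (fun i => ψ i ≠ 0), ψ i = 2 * c * x i := by
      intro i hi
      simp only [Finset.mem_filter] at hi
      have := hcond' i
      rcases mul_eq_zero.mp this with h | h
      · exact sub_eq_zero.mp h
      · exact absurd (by simpa using congrArg (starRingEnd ℂ) h) (by simpa using hi.2)
    have key : ∀ i ∈ Finset.univ.filter (fun i => ψ i ≠ 0),
        ‖x i‖ ^ 2 = ‖ψ i‖ ^ 2 / 2 := by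
      intro i hi
      rw [hmem i hi, norm_mul, norm_mul, Complex.norm_two, mul_pow, mul_pow,
        hcabs]
      ring
    rw [Finset.sum_congr rfl key]
    rw [← Finset.sum_div]
    have : ∑ i ∈ Finset.univ.filter (fun i => ψ i ≠ 0), ‖ψ i‖ ^ 2
        = ∑ i, ‖ψ i‖ ^ 2 := by
      refine Finset.sum_subset (Finset.subset_univ _) ?_
      intro i _ hi
      simp only [Finset.mem_filter, Finset.mem_univ, true_and, not_not] at hi
      simp [hi]
    rw [this, hnorm']
  · rintro ⟨Δ, hΔ⟩
    set ψ : Fin d → ℂ := fun i => if i ∈ Δ then (Real.sqrt 2 : ℂ) * x i else 0 with hψ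
    have hsum : ∑ i ∈ Δ, (starRingEnd ℂ) (x i) * x i = 1 / 2 := by
      have e : ∀ z : ℂ, (starRingEnd ℂ) z * z = ((‖z‖ ^ 2 : ℝ) : ℂ) := fun z => by
        rw [mul_comm, Complex.mul_conj, Complex.sq_norm]
      rw [Finset.sum_congr rfl (fun i _ => e (x i)), ← Complex.ofReal_sum, hΔ]
      norm_num
    have hc : ∑ j, (starRingEnd ℂ) (x j) * ψ j = (Real.sqrt 2 : ℂ) / 2 := by
      rw [hψ]
      rw [show ∑ j, (starRingEnd ℂ) (x j) * (if j ∈ Δ then (Real.sqrt 2 : ℂ) * x j else 0)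
          = ∑ j, (if j ∈ Δ then (Real.sqrt 2 : ℂ) * ((starRingEnd ℂ) (x j) * x j) else 0) from
        Finset.sum_congr rfl fun j _ => by by_cases h : j ∈ Δ <;> simp [h] <;> ring,
        Finset.sum_ite_mem, Finset.univ_inter]
      rw [← Finset.mul_sum, hsum]; ring
    have hsq : (Real.sqrt 2 : ℂ) * (Real.sqrt 2 : ℂ) = 2 := by
      have h2 : Real.sqrt 2 * Real.sqrt 2 = 2 := Real.mul_self_sqrt (by norm_num)
      rw [← Complex.ofReal_mul, h2]; norm_num
    refine ⟨ψ, ?_, ?_⟩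
    · simp only [dotProduct, Pi.star_apply, RCLike.star_def]
      rw [show ∑ i, (starRingEnd ℂ) (ψ i) * ψ i
          = ∑ i ∈ Δ, ((Real.sqrt 2 : ℂ) * (Real.sqrt 2 : ℂ)) * ((starRingEnd ℂ) (x i) * x i) from by
        rw [hψ]
        rw [show (∑ i, (starRingEnd ℂ) (if i ∈ Δ then (Real.sqrt 2 : ℂ) * x i else 0) * (if i ∈ Δ then (Real.sqrt 2 : ℂ) * x i else 0))
            = ∑ i, (if i ∈ Δ then ((Real.sqrt 2 : ℂ) * (Real.sqrt 2 : ℂ)) * ((starRingEnd ℂ) (x i) * x i) else 0) from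
          Finset.sum_congr rfl fun i _ => by by_cases h : i ∈ Δ <;> simp [h] <;> ring]
        rw [Finset.sum_ite_mem, Finset.univ_inter]]
      rw [hsq, ← Finset.mul_sum, hsum]; norm_num
    · intro i
      rw [hdiag ψ i, hc]
      by_cases h : i ∈ Δ
      · have : ψ i = (Real.sqrt 2 : ℂ) * x i := by rw [hψ]; simp [h]
        rw [this]
        have : (Real.sqrt 2 : ℂ) * x i - 2 * ((Real.sqrt 2 : ℂ) / 2) * x i = 0 := by ring
        rw [this, zero_mul]
      · have : ψ i = 0 := by rw [hψ]; simp [h]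
        rw [this]; simp
end

section
/- Let U = I − 2|x⟩⟨x| with x a unit vector and |x_0|² = ω > 1/2 (where ω = max_i |x_i|², attained at index 0), ω < 1. Let E' = I − 2|0⟩⟨0|. Then the eigenvalues of UE' are 2ω − 1 + 2√(ω(1−ω)) i, 2ω − 1 − 2√(ω(1−ω)) i, and 1 with multiplicity d−2. -/
open Matrix Polynomial

private lemma auxdet {Kf : Type*} [Field Kf] (u w cz c : Kf) (hu : u ≠ 0) (hw : cz * c = w) :
    u ^ 2 * ((1 + -u⁻¹ * (4 * w - 2)) * (1 + -u⁻¹ * (-2))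
      - (-u⁻¹ * (2 * cz)) * (-u⁻¹ * (-2 * c)))
    = (u + 1) ^ 2 - (4 * w - 2) * (u + 1) + 1 := by
  subst hw
  field_simp
  ring

set_option maxHeartbeats 1000000 in
set_option synthInstance.maxHeartbeats 200000 in
theorem stmt14 (d : ℕ) (hd : 0 < d) (x : Fin d → ℂ) (ω : ℝ)
    (hx : ∑ i, ‖x i‖ ^ 2 = 1)
    (hω0 : ‖x ⟨0, hd⟩‖ ^ 2 = ω)
    (hωmax : ∀ i, ‖x i‖ ^ 2 ≤ ω)
    (hωlo : 1 / 2 < ω) (hωhi : ω < 1)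
    (U E' : Matrix (Fin d) (Fin d) ℂ)
    (hU : U = 1 - (2 : ℂ) • Matrix.vecMulVec x (star x))
    (hE' : E' = 1 - (2 : ℂ) • Matrix.single ⟨0, hd⟩ ⟨0, hd⟩ (1 : ℂ)) :
    (U * E').charpoly =
      (X - C ((2 * ω - 1 : ℝ) + 2 * Real.sqrt (ω * (1 - ω)) * Complex.I))
        * (X - C ((2 * ω - 1 : ℝ) - 2 * Real.sqrt (ω * (1 - ω)) * Complex.I))
        * (X - C 1) ^ (d - 2) := by
  classical
  have hd2 : 2 ≤ d := by
    by_contra h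
    push_neg at h
    interval_cases d
    rw [Fin.sum_univ_one] at hx
    have he : ‖x ⟨0, hd⟩‖ ^ 2 = ‖x 0‖ ^ 2 := rfl
    rw [he, hx] at hω0
    linarith
  set z : Fin d := ⟨0, hd⟩ with hz
  -- scalar facts
  have hs1 : ∑ k, (starRingEnd ℂ) (x k) * x k = 1 := by
    have h1 : ∀ k, (starRingEnd ℂ) (x k) * x k = ((‖x k‖ ^ 2 : ℝ) : ℂ) := by
      intro k
      rw [mul_comm, Complex.mul_conj, Complex.sq_norm]
    simp_rw [h1]
    rw [← Complex.ofReal_sum, hx, Complex.ofReal_one]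
  have hsz : (starRingEnd ℂ) (x z) * x z = ((ω : ℝ) : ℂ) := by
    rw [mul_comm, Complex.mul_conj, ← Complex.sq_norm, hω0]
  -- the rank-2 factorization
  set B : Matrix (Fin d) (Fin 2) ℂ :=
    Matrix.of (fun i j => if j = 0 then x i else if i = z then 1 else 0) with hB
  set N : Matrix (Fin 2) (Fin d) ℂ :=
    Matrix.of (fun j k => if j = 0 then
        -2 * (starRingEnd ℂ) (x k) + (if k = z then 4 * (starRingEnd ℂ) (x z) else 0)
      else (if k = z then (-2 : ℂ) else 0)) with hN
  have hE'd : E' = Matrix.diagonal (fun j => if j = z then (-1 : ℂ) else 1) := by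
    rw [hE']
    ext i j
    rcases eq_or_ne i j with h | h
    · subst h
      by_cases h2 : i = z
      · simp [Matrix.single, Matrix.diagonal_apply, Matrix.one_apply,
          Matrix.sub_apply, Matrix.smul_apply, Matrix.of_apply, h2]
        norm_num
      · simp [Matrix.single, Matrix.diagonal_apply, Matrix.one_apply,
          Matrix.sub_apply, Matrix.smul_apply, Matrix.of_apply, h2, Ne.symm h2]
    · have hnot : ¬(z = i ∧ z = j) := fun ⟨a, b⟩ => h (a ▸ b ▸ rfl)
      simp [Matrix.single, Matrix.diagonal_apply, Matrix.one_apply,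
        Matrix.sub_apply, Matrix.smul_apply, Matrix.of_apply, h, hnot]
  have hM : U * E' = 1 + B * N := by
    rw [hU, hE'd]
    ext i k
    rw [Matrix.mul_diagonal, Matrix.add_apply, Matrix.mul_apply, Fin.sum_univ_two]
    rcases eq_or_ne k z with hk | hk <;> rcases eq_or_ne i k with hik | hik
    · have hiz : i = z := hik.trans hk
      simp [hB, hN, hk, hik, hiz, Matrix.one_apply, Matrix.sub_apply, Matrix.smul_apply,
        Matrix.vecMulVec_apply, Matrix.of_apply]
      ring
    · have hiz : i ≠ z := fun h => hik (h.trans hk.symm)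
      simp [hB, hN, hk, hik, hiz, Matrix.one_apply, Matrix.sub_apply, Matrix.smul_apply,
        Matrix.vecMulVec_apply, Matrix.of_apply]
      ring
    · simp [hB, hN, hk, hik, Matrix.one_apply, Matrix.sub_apply, Matrix.smul_apply,
        Matrix.vecMulVec_apply, Matrix.of_apply]
      ring
    · simp [hB, hN, hk, hik, Matrix.one_apply, Matrix.sub_apply, Matrix.smul_apply,
        Matrix.vecMulVec_apply, Matrix.of_apply]
      ring
  -- the 2x2 product
  have e00 : (N * B) 0 0 = 4 * ((ω : ℝ) : ℂ) - 2 := by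
    rw [Matrix.mul_apply]
    have h1 : ∀ k, N 0 k * B k 0 =
        -2 * ((starRingEnd ℂ) (x k) * x k)
          + (if k = z then 4 * ((starRingEnd ℂ) (x z) * x k) else 0) := by
      intro k
      simp only [hN, hB, Matrix.of_apply, if_pos rfl]
      split_ifs with h <;> ring
    rw [Finset.sum_congr rfl (fun k _ => h1 k), Finset.sum_add_distrib,
      ← Finset.mul_sum, hs1, Finset.sum_ite_eq' Finset.univ z]
    simp [hsz]
    ring
  have e01 : (N * B) 0 1 = 2 * (starRingEnd ℂ) (x z) := by
    rw [Matrix.mul_apply, Finset.sum_eq_single z]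
    · simp [hN, hB]
      ring
    · intro b _ hb
      simp [hN, hB, hb]
    · simp
  have e10 : (N * B) 1 0 = -2 * x z := by
    rw [Matrix.mul_apply, Finset.sum_eq_single z]
    · simp [hN, hB]
    · intro b _ hb
      simp [hN, hB, hb]
    · simp
  have e11 : (N * B) 1 1 = -2 := by
    rw [Matrix.mul_apply, Finset.sum_eq_single z]
    · simp [hN, hB]
    · intro b _ hb
      simp [hN, hB, hb]
    · simp
  have hNB : N * B = !![4 * ((ω : ℝ) : ℂ) - 2, 2 * (starRingEnd ℂ) (x z);
      -2 * x z, (-2 : ℂ)] := by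
    rw [Matrix.eta_fin_two (N * B), e00, e01, e10, e11]
  -- move to the field of rational functions
  set f : ℂ[X] →+* RatFunc ℂ := algebraMap ℂ[X] (RatFunc ℂ) with hf
  set g : ℂ →+* RatFunc ℂ := f.comp Polynomial.C with hg
  have hfC : ∀ a : ℂ, f (Polynomial.C a) = g a := fun _ => rfl
  have hinj : Function.Injective f := IsFractionRing.injective ℂ[X] (RatFunc ℂ)
  set T : RatFunc ℂ := f X with hT
  set u : RatFunc ℂ := T - 1 with huDef
  have hu : u ≠ 0 := by
    intro h0
    have h1 : f (X - 1) = 0 := by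
      rw [map_sub, _root_.map_one, ← hT, ← huDef, h0]
    have h2 : (X - 1 : ℂ[X]) = 0 := hinj (by rw [h1, map_zero])
    have h3 : (X - 1 : ℂ[X]) ≠ 0 := by
      simpa using Polynomial.X_sub_C_ne_zero (1 : ℂ)
    exact h3 h2
  -- mapped charmatrix
  have hcm : (charmatrix (U * E')).map f
      = u • (1 : Matrix (Fin d) (Fin d) (RatFunc ℂ)) - ((B * N).map g) := by
    rw [hM]
    ext i j
    rcases eq_or_ne i j with h | h
    · subst h
      simp only [Matrix.map_apply, charmatrix_apply_eq, Matrix.sub_apply, Matrix.smul_apply,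
        Matrix.one_apply_eq, Matrix.add_apply, smul_eq_mul, _root_.map_sub, map_add,
        _root_.map_one, hfC, mul_one]
      rw [huDef, hT]
      ring
    · simp only [Matrix.map_apply, charmatrix_apply_ne _ _ _ h, Matrix.sub_apply,
        Matrix.smul_apply, Matrix.one_apply_ne h, Matrix.add_apply, smul_eq_mul,
        map_neg, map_add, _root_.map_one, hfC, mul_zero, zero_add, zero_sub]
  have hsub : u • (1 : Matrix (Fin d) (Fin d) (RatFunc ℂ)) - ((B * N).map g)
      = u • ((1 : Matrix (Fin d) (Fin d) (RatFunc ℂ)) + B.map g * ((-u⁻¹) • N.map g)) := by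
    rw [Matrix.map_mul, smul_add, Matrix.mul_smul, smul_smul, mul_neg, mul_inv_cancel₀ hu,
      neg_one_smul, sub_eq_add_neg]
  -- key scalar quantities
  set w : RatFunc ℂ := g ((ω : ℝ) : ℂ) with hw
  set cz : RatFunc ℂ := g ((starRingEnd ℂ) (x z)) with hcz
  set cc : RatFunc ℂ := g (x z) with hcc
  have hwzc : cz * cc = w := by rw [hcz, hcc, hw, ← _root_.map_mul, hsz]
  -- eigenvalue facts
  set s : ℝ := Real.sqrt (ω * (1 - ω)) with hs
  have hsq : ((s : ℝ) : ℂ) ^ 2 = ((ω : ℝ) : ℂ) * (1 - ((ω : ℝ) : ℂ)) := by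
    have h1 : s ^ 2 = ω * (1 - ω) := Real.sq_sqrt (by nlinarith)
    rw [show ((s : ℝ) : ℂ) ^ 2 = ((s ^ 2 : ℝ) : ℂ) by push_cast; ring, h1]
    push_cast
    ring
  set a₁ : ℂ := ((2 * ω - 1 : ℝ) : ℂ) + 2 * (s : ℂ) * Complex.I with ha₁
  set a₂ : ℂ := ((2 * ω - 1 : ℝ) : ℂ) - 2 * (s : ℂ) * Complex.I with ha₂
  have hprodC : a₁ * a₂ = 1 := by
    rw [ha₁, ha₂]
    push_cast
    linear_combination (-4 * ((s : ℝ) : ℂ) ^ 2) * Complex.I_sq + 4 * hsq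
  have hsumC : a₁ + a₂ = 4 * ((ω : ℝ) : ℂ) - 2 := by
    rw [ha₁, ha₂]
    push_cast
    ring
  have hprodK : g a₁ * g a₂ = 1 := by rw [← _root_.map_mul, hprodC, _root_.map_one]
  have hsumK : g a₁ + g a₂ = 4 * w - 2 := by
    rw [← _root_.map_add, hsumC, _root_.map_sub, _root_.map_mul, _root_.map_ofNat, _root_.map_ofNat, hw]
  -- now the main computation
  apply hinj
  calc f ((U * E').charpoly)
      = Matrix.det ((charmatrix (U * E')).map f) := by
        rw [Matrix.charpoly, RingHom.map_det, RingHom.mapMatrix_apply]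
    _ = Matrix.det (u • ((1 : Matrix (Fin d) (Fin d) (RatFunc ℂ))
          + B.map g * ((-u⁻¹) • N.map g))) := by rw [hcm, hsub]
    _ = u ^ d * Matrix.det ((1 : Matrix (Fin d) (Fin d) (RatFunc ℂ))
          + B.map g * ((-u⁻¹) • N.map g)) := by
        rw [Matrix.det_smul, Fintype.card_fin]
    _ = u ^ d * Matrix.det ((1 : Matrix (Fin 2) (Fin 2) (RatFunc ℂ))
          + ((-u⁻¹) • N.map g) * B.map g) := by rw [Matrix.det_one_add_mul_comm]
    _ = u ^ d * Matrix.det ((1 : Matrix (Fin 2) (Fin 2) (RatFunc ℂ))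
          + (-u⁻¹) • ((N * B).map g)) := by rw [Matrix.smul_mul, Matrix.map_mul]
    _ = u ^ d * ((1 + -u⁻¹ * (4 * w - 2)) * (1 + -u⁻¹ * (-2))
          - (-u⁻¹ * (2 * cz)) * (-u⁻¹ * (-2 * cc))) := by
        rw [hNB, Matrix.det_fin_two]
        have hg4' : g (4 : ℂ) = 4 := map_ofNat g 4
        have hg2' : g (2 : ℂ) = 2 := map_ofNat g 2
        simp [Matrix.add_apply, Matrix.smul_apply, Matrix.map_apply, Matrix.one_apply,
          _root_.map_sub, _root_.map_mul, map_neg, hg4', hg2', ← hw, ← hcz, ← hcc]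
        try ring
    _ = u ^ (d - 2) * (u ^ 2 * ((1 + -u⁻¹ * (4 * w - 2)) * (1 + -u⁻¹ * (-2))
          - (-u⁻¹ * (2 * cz)) * (-u⁻¹ * (-2 * cc)))) := by
        conv_lhs => rw [show u ^ d = u ^ (d - 2) * u ^ 2 by
          rw [← pow_add]; congr 1; omega]
        rw [mul_assoc]
    _ = u ^ (d - 2) * ((u + 1) ^ 2 - (4 * w - 2) * (u + 1) + 1) := by
        rw [auxdet u w cz cc hu hwzc]
    _ = f ((X - Polynomial.C a₁) * (X - Polynomial.C a₂)
          * (X - Polynomial.C 1) ^ (d - 2)) := by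
        have h1 : f (X - Polynomial.C a₁) = T - g a₁ := by
          rw [_root_.map_sub, hfC, hT]
        have h2 : f (X - Polynomial.C a₂) = T - g a₂ := by
          rw [_root_.map_sub, hfC, hT]
        have h3 : f (X - Polynomial.C 1) = T - 1 := by
          rw [_root_.map_sub, Polynomial.C_1, _root_.map_one, hT]
        rw [_root_.map_mul, _root_.map_mul, map_pow, h1, h2, h3]
        have hTu : T = u + 1 := by rw [huDef]; ring
        rw [hTu]
        have hexp : (u + 1 - g a₁) * (u + 1 - g a₂)
            = (u + 1) ^ 2 - (g a₁ + g a₂) * (u + 1) + g a₁ * g a₂ := by ring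
        rw [hexp, hsumK, hprodK]
        ring
end

section
/- Let F_d be the d×d Fourier matrix with entries (F_d)_{jk} = e^{2πijk/d}/√d, d ≥ 4. Then the matrix X with entries X_{00} = 4cos(2π/d), X_{01} = X_{0,d−1} = X_{10} = X_{d−1,0} = −2cos(2π/d), X_{11} = X_{1,d−1} = X_{d−1,1} = X_{d−1,d−1} = 1, and all other entries 0, is positive semidefinite of rank at most 2 and satisfies diag(F_d† X) = 0. -/
open Matrix
open scoped ComplexOrder Real

noncomputable def vAux (d : ℕ) (c : ℝ) : Fin d → ℂ :=
  fun a => if (a : ℕ) = 0 then (c : ℂ) else if (a : ℕ) = 1 ∨ (a : ℕ) = d - 1 then -1 else 0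

noncomputable def wAux (d : ℕ) (t : ℝ) : Fin d → ℂ :=
  fun a => if (a : ℕ) = 0 then (t : ℂ) else 0

theorem stmt15 (d : ℕ) (hd : 4 ≤ d)
    (F X : Matrix (Fin d) (Fin d) ℂ)
    (hF : ∀ j k : Fin d, F j k =
      Complex.exp (2 * π * Complex.I * (j : ℕ) * (k : ℕ) / d) / Real.sqrt d)
    (hX : X =
      (4 * Real.cos (2 * π / d) : ℂ) •
          Matrix.single (⟨0, by omega⟩ : Fin d) (⟨0, by omega⟩ : Fin d) (1 : ℂ)
        - (2 * Real.cos (2 * π / d) : ℂ) •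
          (Matrix.single (⟨0, by omega⟩ : Fin d) (⟨1, by omega⟩ : Fin d) (1 : ℂ)
            + Matrix.single (⟨0, by omega⟩ : Fin d) (⟨d - 1, by omega⟩ : Fin d) (1 : ℂ)
            + Matrix.single (⟨1, by omega⟩ : Fin d) (⟨0, by omega⟩ : Fin d) (1 : ℂ)
            + Matrix.single (⟨d - 1, by omega⟩ : Fin d) (⟨0, by omega⟩ : Fin d) (1 : ℂ))
        + (Matrix.single (⟨1, by omega⟩ : Fin d) (⟨1, by omega⟩ : Fin d) (1 : ℂ)
            + Matrix.single (⟨1, by omega⟩ : Fin d) (⟨d - 1, by omega⟩ : Fin d) (1 : ℂ)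
            + Matrix.single (⟨d - 1, by omega⟩ : Fin d) (⟨1, by omega⟩ : Fin d) (1 : ℂ)
            + Matrix.single (⟨d - 1, by omega⟩ : Fin d) (⟨d - 1, by omega⟩ : Fin d) (1 : ℂ))) :
    X.PosSemidef ∧ X.rank ≤ 2 ∧ ∀ j, (Fᴴ * X) j j = 0 := by
  have hcos : 0 ≤ Real.cos (2 * π / d) := by
    apply Real.cos_nonneg_of_mem_Icc
    have h4 : (4:ℝ) ≤ d := by exact_mod_cast hd
    constructor
    · have : (0:ℝ) ≤ 2*π/d := by positivity
      nlinarith [Real.pi_pos]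
    · rw [div_le_iff₀ (by linarith)]
      nlinarith [Real.pi_pos]
  have hcos1 : Real.cos (2 * π / d) ≤ 1 := Real.cos_le_one _
  have hs : 0 ≤ 2 * (2 * Real.cos (2 * π / d)) - (2 * Real.cos (2 * π / d))^2 := by nlinarith
  have hss := Real.mul_self_sqrt hs
  -- the entrywise description of `X`
  have hXe : ∀ a b : Fin d, X a b =
      vAux d (2 * Real.cos (2 * π / d)) a * star (vAux d (2 * Real.cos (2 * π / d)) b)
      + wAux d (Real.sqrt (2 * (2 * Real.cos (2 * π / d)) - (2 * Real.cos (2 * π / d))^2)) a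
        * star (wAux d (Real.sqrt (2 * (2 * Real.cos (2 * π / d)) - (2 * Real.cos (2 * π / d))^2)) b) := by
    set g := Real.cos (2 * π / (d:ℝ)) with hg
    set t := Real.sqrt (2 * (2 * g) - (2 * g) ^ 2) with ht
    clear_value t
    clear_value g
    clear hg ht hcos hcos1 hs
    intro a b
    rw [hX]
    simp only [Matrix.sub_apply, Matrix.add_apply, Matrix.smul_apply, Matrix.single,
      Matrix.of_apply, smul_eq_mul, mul_ite, mul_one, mul_zero, vAux, wAux, Fin.mk.injEq,
      Fin.ext_iff, Fin.val_mk, @eq_comm ℕ 0, @eq_comm ℕ 1, @eq_comm ℕ (d-1)]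
    have hN0 : ¬(0 = d - 1) := by omega
    have hN1 : ¬(1 = d - 1) := by omega
    by_cases ha0 : (a:ℕ) = 0 <;> by_cases ha1 : (a:ℕ) = 1 <;> by_cases haN : (a:ℕ) = d-1 <;>
      by_cases hb0 : (b:ℕ) = 0 <;> by_cases hb1 : (b:ℕ) = 1 <;> by_cases hbN : (b:ℕ) = d-1 <;>
      first
      | (exfalso; omega)
      | (simp [ha0, ha1, haN, hb0, hb1, hbN, hN0, hN1, Complex.conj_ofReal,
            show ¬ d = 2 by omega, show ¬ d - 1 = 0 by omega] <;>
          first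
          | omega
          | (push_cast; ring)
          | (norm_cast; linear_combination -hss)
          | skip)
    all_goals (norm_cast; linear_combination -hss)
  -- PSD and rank via a 2 × d factorization
  set B : Matrix (Fin 2) (Fin d) ℂ :=
    Matrix.of (fun i a => if i = 0 then star (vAux d (2 * Real.cos (2 * π / d)) a)
      else star (wAux d (Real.sqrt (2 * (2 * Real.cos (2 * π / d)) - (2 * Real.cos (2 * π / d))^2)) a)) with hB
  have hXB : X = Bᴴ * B := by
    ext a b
    rw [Matrix.mul_apply, Fin.sum_univ_two, hXe]
    simp [hB, Matrix.conjTranspose_apply]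
  refine ⟨?_, ?_, ?_⟩
  · rw [hXB]; exact Matrix.posSemidef_conjTranspose_mul_self B
  · rw [hXB, Matrix.rank_conjTranspose_mul_self]
    exact le_trans (Matrix.rank_le_card_height B) (by simp)
  -- the vanishing diagonal
  · have hd1 : (1:ℕ) ≤ d := by omega
    have hdR : (0:ℝ) < d := by positivity
    have hd0 : (d:ℂ) ≠ 0 := by exact_mod_cast hdR.ne'
    have hsd : ((Real.sqrt d : ℝ) : ℂ) ≠ 0 := by
      have : Real.sqrt d ≠ 0 := by positivity
      exact_mod_cast this
    have hsum : ∀ f : Fin d → ℂ, (∀ k : Fin d, (k:ℕ) ≠ 0 → (k:ℕ) ≠ 1 → (k:ℕ) ≠ d - 1 → f k = 0) →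
        ∑ k, f k = f ⟨0, by omega⟩ + f ⟨1, by omega⟩ + f ⟨d - 1, by omega⟩ := by
      intro f hf
      classical
      rw [← Finset.sum_subset (Finset.subset_univ
          ({⟨0, by omega⟩, ⟨1, by omega⟩, ⟨d - 1, by omega⟩} : Finset (Fin d)))]
      · rw [Finset.sum_insert (by simp [Fin.ext_iff]; omega),
          Finset.sum_insert (by simp [Fin.ext_iff]; omega), Finset.sum_singleton, add_assoc]
      · intro x _ hx
        simp only [Finset.mem_insert, Finset.mem_singleton, Fin.ext_iff] at hx
        push_neg at hx
        exact hf x (by simpa using hx.1) (by simpa using hx.2.1) (by simpa using hx.2.2)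
    have hper : ∀ n : ℤ, Complex.exp ((n:ℂ) * (2 * ↑π * Complex.I)) = 1 := fun n => by
      simpa [mul_comm] using Complex.exp_int_mul_two_pi_mul_I n
    have hcos2 : Complex.exp (2*(π:ℂ)*Complex.I/(d:ℂ)) + Complex.exp (2*(π:ℂ)*(-Complex.I)/(d:ℂ))
        = 2 * Complex.cos (2*(π:ℂ)/(d:ℂ)) := by
      rw [show (2*(π:ℂ)*Complex.I/(d:ℂ)) = (2*(π:ℂ)/(d:ℂ))*Complex.I by ring,
        show (2*(π:ℂ)*(-Complex.I)/(d:ℂ)) = -(2*(π:ℂ)/(d:ℂ))*Complex.I by ring,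
        ← Complex.two_cos]
    have h2 : Complex.exp (2*(π:ℂ)*(-Complex.I)*((d:ℂ)-1)/(d:ℂ)) = Complex.exp (2*(π:ℂ)*Complex.I/(d:ℂ)) := by
      rw [show (2*(π:ℂ)*(-Complex.I)*((d:ℂ)-1)/(d:ℂ))
          = 2*(π:ℂ)*Complex.I/(d:ℂ) + ((-1:ℤ):ℂ)*(2*(π:ℂ)*Complex.I) by field_simp; ring,
        Complex.exp_add, hper, mul_one]
    have h3 : Complex.exp (2*(π:ℂ)*(-Complex.I)*((d:ℂ)-1)*((d:ℂ)-1)/(d:ℂ))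
        = Complex.exp (2*(π:ℂ)*(-Complex.I)/(d:ℂ)) := by
      rw [show (2*(π:ℂ)*(-Complex.I)*((d:ℂ)-1)*((d:ℂ)-1)/(d:ℂ))
          = 2*(π:ℂ)*(-Complex.I)/(d:ℂ) + (((2:ℤ) - (d:ℤ) : ℤ):ℂ)*(2*(π:ℂ)*Complex.I) by
            push_cast; field_simp; ring,
        Complex.exp_add, hper, mul_one]
    intro j
    rw [Matrix.mul_apply]
    rw [hsum _ (by
      intro k hk0 hk1 hkN
      rw [hXe]
      simp [vAux, wAux, hk0, hk1, hkN])]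
    simp only [Matrix.conjTranspose_apply, hXe, hF]
    by_cases hj0 : (j:ℕ) = 0
    · simp [vAux, wAux, hj0, Fin.val_mk, show ¬ ((0:ℕ) = 1) by omega,
        show (0:ℕ) ≠ d - 1 by omega, show (1:ℕ) ≠ d - 1 by omega,
        show (d:ℕ) - 1 ≠ 0 by omega, show (d:ℕ) - 1 ≠ 1 by omega, Complex.conj_ofReal]
      simp only [← Complex.cos_conj, map_div₀, _root_.map_mul, Complex.conj_ofReal, map_ofNat,
        Complex.conj_natCast]
      have hssC := congrArg (Complex.ofReal) hss
      push_cast at hssC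
      linear_combination ((Real.sqrt d : ℝ) : ℂ)⁻¹ * hssC
    · by_cases hj1 : (j:ℕ) = 1
      · simp [vAux, wAux, hj0, hj1, Fin.val_mk, show ¬ ((0:ℕ) = 1) by omega,
          show (0:ℕ) ≠ d - 1 by omega, show (1:ℕ) ≠ d - 1 by omega,
          show (d:ℕ) - 1 ≠ 0 by omega, show (d:ℕ) - 1 ≠ 1 by omega, Complex.conj_ofReal]
        simp only [← Complex.exp_conj, map_div₀, _root_.map_mul, Complex.conj_I,
          Complex.conj_ofReal, map_ofNat, Complex.conj_natCast, Nat.cast_sub hd1, map_sub,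
          _root_.map_one, Nat.cast_one]
        rw [h2]
        linear_combination ((Real.sqrt d : ℝ) : ℂ)⁻¹ * hcos2
      · by_cases hjN : (j:ℕ) = d - 1
        · simp [vAux, wAux, hj0, hj1, hjN, Fin.val_mk, show ¬ ((0:ℕ) = 1) by omega,
            show (0:ℕ) ≠ d - 1 by omega, show (1:ℕ) ≠ d - 1 by omega,
            show (d:ℕ) - 1 ≠ 0 by omega, show (d:ℕ) - 1 ≠ 1 by omega, Complex.conj_ofReal]
          simp only [← Complex.exp_conj, map_div₀, _root_.map_mul, Complex.conj_I,
            Complex.conj_ofReal, map_ofNat, Complex.conj_natCast, Nat.cast_sub hd1, map_sub,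
            _root_.map_one, Nat.cast_one]
          rw [h2, h3]
          linear_combination ((Real.sqrt d : ℝ) : ℂ)⁻¹ * hcos2
        · simp [vAux, wAux, hj0, hj1, hjN]
end

section
/- Let U ∈ U(d) and suppose there exists a density matrix ρ with diag(U†ρ) = 0. Then for every diagonal (not necessarily unitary) matrix D, 0 belongs to the numerical range of UD + D†U†. -/
open Matrix
open scoped ComplexOrder

theorem stmt17 (d : ℕ) (U : Matrix (Fin d) (Fin d) ℂ)
    (hU : U ∈ Matrix.unitaryGroup (Fin d) ℂ)
    (hρ : ∃ ρ : Matrix (Fin d) (Fin d) ℂ, ρ.PosSemidef ∧ ρ.trace = 1 ∧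
      ∀ i, (Uᴴ * ρ) i i = 0) :
    ∀ D : Matrix (Fin d) (Fin d) ℂ, D.IsDiag →
      ∃ x : Fin d → ℂ, star x ⬝ᵥ x = 1 ∧
        star x ⬝ᵥ (U * D + Dᴴ * Uᴴ).mulVec x = 0 := by
  intro D hD
  obtain ⟨ρ, hρ1, hρ2, hρ3⟩ := hρ
  set A := U * D + Dᴴ * Uᴴ with hAdef
  have hA : A.IsHermitian := by
    simp only [hAdef, Matrix.IsHermitian, conjTranspose_add, conjTranspose_mul,
      conjTranspose_conjTranspose]
    exact add_comm _ _
  -- trace of Dᴴ * (Uᴴ * ρ) is zero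
  have h1 : (Dᴴ * (Uᴴ * ρ)).trace = 0 := by
    rw [Matrix.trace]
    apply Finset.sum_eq_zero
    intro i _
    rw [Matrix.diag]
    rw [Matrix.mul_apply]
    apply Finset.sum_eq_zero
    intro j _
    by_cases h : j = i
    · subst h; rw [hρ3]; ring
    · have : Dᴴ i j = 0 := by
        rw [conjTranspose_apply, hD h, star_zero]
      rw [this]; ring
  have h2 : (U * (D * ρ)).trace = 0 := by
    have hh : (U * (D * ρ))ᴴ = ρ * (Dᴴ * Uᴴ) := by
      simp [conjTranspose_mul, hρ1.isHermitian.eq, Matrix.mul_assoc]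
    have : (U * (D * ρ)).trace = star ((U * (D * ρ))ᴴ.trace) := by
      rw [trace_conjTranspose]; simp
    rw [this, hh, trace_mul_comm, Matrix.mul_assoc, h1]
    simp
  have htr : (A * ρ).trace = 0 := by
    rw [hAdef, add_mul, trace_add, Matrix.mul_assoc, Matrix.mul_assoc, h2, h1, add_zero]
  -- spectral decomposition
  set V : Matrix (Fin d) (Fin d) ℂ := (hA.eigenvectorUnitary : Matrix (Fin d) (Fin d) ℂ) with hV
  set μ := hA.eigenvalues with hμ
  have hVV : V * star V = 1 := (Matrix.mem_unitaryGroup_iff).mp hA.eigenvectorUnitary.2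
  set σ : Matrix (Fin d) (Fin d) ℂ := star V * ρ * V with hσdef
  have hσ : σ.PosSemidef := by
    have := hρ1.conjTranspose_mul_mul_same V
    simpa [hσdef, Matrix.star_eq_conjTranspose] using this
  have hσtr : σ.trace = 1 := by
    rw [hσdef, trace_mul_comm, ← Matrix.mul_assoc, hVV, Matrix.one_mul, hρ2]
  have htrA : (diagonal (Complex.ofReal ∘ μ) * σ).trace = 0 := by
    have hspec := hA.spectral_theorem
    calc (diagonal (Complex.ofReal ∘ μ) * σ).trace
        = ((diagonal (Complex.ofReal ∘ μ) * (star V * ρ)) * V).trace := by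
          rw [hσdef]
          congr 1
          simp only [Matrix.mul_assoc]
      _ = (V * (diagonal (Complex.ofReal ∘ μ) * (star V * ρ))).trace :=
          (trace_mul_comm _ _)
      _ = (A * ρ).trace := by
          rw [hspec]
          congr 1
          simp only [Unitary.conjStarAlgAut_apply, Matrix.mul_assoc]
          rfl
      _ = 0 := htr
  -- diagonal entries of σ
  set p : Fin d → ℝ := fun i => (σ i i).re with hp
  have hσdiag : ∀ i, σ i i = (p i : ℂ) := by
    intro i
    have h0 : (0 : ℂ) ≤ σ i i := by
      have := hσ.dotProduct_mulVec_nonneg (Pi.single i 1)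
      simpa [dotProduct, mulVec, Pi.single_apply, Finset.sum_ite_eq] using this
    have := Complex.nonneg_iff.mp h0
    exact (Complex.ext (by simp [hp]) (by simp [hp, ← this.2])).symm
  have hp0 : ∀ i, 0 ≤ p i := by
    intro i
    have h0 : (0 : ℂ) ≤ σ i i := by
      have := hσ.dotProduct_mulVec_nonneg (Pi.single i 1)
      simpa [dotProduct, mulVec, Pi.single_apply, Finset.sum_ite_eq] using this
    exact (Complex.nonneg_iff.mp h0).1
  have hsum1 : ∑ i, p i = 1 := by
    have : σ.trace = (↑(∑ i, p i) : ℂ) := by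
      rw [Matrix.trace]
      push_cast
      exact Finset.sum_congr rfl fun i _ => hσdiag i
    rw [hσtr] at this
    exact_mod_cast this.symm
  have hsum0 : ∑ i, μ i * p i = 0 := by
    have : (↑(∑ i, μ i * p i) : ℂ) = 0 := by
      rw [← htrA, Matrix.trace]
      push_cast
      apply Finset.sum_congr rfl
      intro i _
      rw [Matrix.diag, Matrix.diagonal_mul, hσdiag i]
      simp
    exact_mod_cast this
  -- eigenvectors
  set e : Fin d → Fin d → ℂ := fun i => ⇑(hA.eigenvectorBasis i) with he
  have hmul : ∀ i, A *ᵥ e i = (μ i : ℂ) • e i := by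
    intro i
    have := hA.mulVec_eigenvectorBasis i
    simpa [he, Complex.real_smul] using this
  have horth : ∀ i j, star (e i) ⬝ᵥ e j = if i = j then 1 else 0 := by
    intro i j
    have := orthonormal_iff_ite.mp hA.eigenvectorBasis.orthonormal i j
    rw [EuclideanSpace.inner_eq_star_dotProduct, dotProduct_comm] at this
    simpa [he] using this
  -- existence of nonpositive / nonnegative eigenvalues
  have hex : ∃ k, 0 < p k := by
    by_contra hc
    push_neg at hc
    have : ∑ i, p i ≤ 0 := Finset.sum_nonpos fun i _ => hc i
    linarith
  obtain ⟨k, hk⟩ := hex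
  have hneg : ∃ i, μ i ≤ 0 := by
    by_contra hc
    push_neg at hc
    have : 0 < ∑ i, μ i * p i :=
      Finset.sum_pos' (fun i _ => mul_nonneg (hc i).le (hp0 i))
        ⟨k, Finset.mem_univ k, mul_pos (hc k) hk⟩
    linarith
  have hpos : ∃ j, 0 ≤ μ j := by
    by_contra hc
    push_neg at hc
    have : ∑ i, μ i * p i < 0 := by
      have : ∑ i, (-(μ i)) * p i > 0 :=
        Finset.sum_pos' (fun i _ => mul_nonneg (neg_nonneg.mpr (hc i).le) (hp0 i))
          ⟨k, Finset.mem_univ k, mul_pos (neg_pos.mpr (hc k)) hk⟩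
      have h2 : ∑ i, (-(μ i)) * p i = -∑ i, μ i * p i := by
        simp [neg_mul, Finset.sum_neg_distrib]
      linarith [h2 ▸ this]
    linarith
  obtain ⟨i, hi⟩ := hneg
  obtain ⟨j, hj⟩ := hpos
  by_cases hz : ∃ k, μ k = 0
  · obtain ⟨k, hk0⟩ := hz
    refine ⟨e k, ?_, ?_⟩
    · simpa using horth k k
    · rw [hmul k, hk0]
      simp
  · push_neg at hz
    have hi' : μ i < 0 := lt_of_le_of_ne hi (hz i)
    have hj' : 0 < μ j := lt_of_le_of_ne (hj) (Ne.symm (hz j))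
    have hij : i ≠ j := fun h => by rw [h] at hi'; linarith
    set t : ℝ := μ j / (μ j - μ i) with ht
    have hd : 0 < μ j - μ i := by linarith
    have ht0 : 0 ≤ t := le_of_lt (div_pos hj' hd)
    have ht1 : t ≤ 1 := by
      rw [ht, div_le_one hd]; linarith
    set a : ℝ := Real.sqrt t with ha
    set b : ℝ := Real.sqrt (1 - t) with hb
    have ha2 : (a : ℝ) ^ 2 = t := Real.sq_sqrt ht0
    have hb2 : (b : ℝ) ^ 2 = 1 - t := Real.sq_sqrt (by linarith)
    set x : Fin d → ℂ := (a : ℂ) • e i + (b : ℂ) • e j with hx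
    have hii := horth i i
    have hjj := horth j j
    have hijo := horth i j
    have hjio := horth j i
    rw [if_pos rfl] at hii hjj
    rw [if_neg hij] at hijo
    rw [if_neg (Ne.symm hij)] at hjio
    refine ⟨x, ?_, ?_⟩
    · rw [hx]
      simp only [star_add, star_smul, add_dotProduct, dotProduct_add, smul_dotProduct,
        dotProduct_smul, hii, hjj, hijo, hjio, smul_eq_mul, Complex.star_def,
        Complex.conj_ofReal]
      norm_cast
      nlinarith [ha2, hb2]
    · rw [hx]
      have hAx : A *ᵥ ((a : ℂ) • e i + (b : ℂ) • e j)
          = (a : ℂ) • ((μ i : ℂ) • e i) + (b : ℂ) • ((μ j : ℂ) • e j) := by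
        rw [mulVec_add, mulVec_smul, mulVec_smul, hmul i, hmul j]
      rw [hAx]
      have key : t * μ i + (1 - t) * μ j = 0 := by
        rw [ht]
        field_simp
        ring
      simp only [star_add, star_smul, add_dotProduct, dotProduct_add, smul_dotProduct,
        dotProduct_smul, hii, hjj, hijo, hjio, smul_eq_mul, Complex.star_def,
        Complex.conj_ofReal]
      norm_cast
      nlinarith [ha2, hb2, key]
end

section
/- Let U ∈ U(d), E diagonal unitary, D_+ diagonal with strictly positive entries, and suppose 0 ∈ W(UE). Then 0 ∈ W(UE D_+), i.e., there exists a density matrix σ with Tr(UE D_+ σ) = 0. -/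
open Matrix
open scoped ComplexOrder

namespace Stmt18Aux

variable {d : ℕ}

lemma dot_conjT (A : Matrix (Fin d) (Fin d) ℂ) (x : Fin d → ℂ) :
    star x ⬝ᵥ Aᴴ *ᵥ x = starRingEnd ℂ (star x ⬝ᵥ A *ᵥ x) := by
  rw [dotProduct_mulVec, ← star_mulVec]
  simp [dotProduct, map_sum, mul_comm]

lemma sww_real (w : Fin d → ℂ) :
    star w ⬝ᵥ w = ((∑ k, Complex.normSq (w k) : ℝ) : ℂ) := by
  push_cast
  simp only [dotProduct, Pi.star_apply, Complex.star_def]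
  exact Finset.sum_congr rfl fun k _ => by rw [mul_comm, Complex.mul_conj]

lemma quad_ne (M : Matrix (Fin d) (Fin d) ℂ) (hM : M.IsHermitian)
    (hpos : ∀ i, 0 < hM.eigenvalues i) {x : Fin d → ℂ} (hx : x ≠ 0) :
    star x ⬝ᵥ M *ᵥ x ≠ 0 := by
  set V : Matrix (Fin d) (Fin d) ℂ := (hM.eigenvectorUnitary : Matrix (Fin d) (Fin d) ℂ) with hV
  set y : Fin d → ℂ := star V *ᵥ x with hy
  have hVmem : V ∈ Matrix.unitaryGroup (Fin d) ℂ := hM.eigenvectorUnitary.2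
  have hyne : y ≠ 0 := by
    intro h
    apply hx
    have : V *ᵥ y = x := by
      rw [hy, mulVec_mulVec, (mem_unitaryGroup_iff.mp hVmem), one_mulVec]
    rw [h, mulVec_zero] at this
    exact this.symm
  have key : star x ⬝ᵥ M *ᵥ x = ((∑ i, hM.eigenvalues i * Complex.normSq (y i) : ℝ) : ℂ) := by
    conv_lhs => rw [hM.spectral_theorem, Unitary.conjStarAlgAut_apply]
    rw [← mulVec_mulVec, ← mulVec_mulVec, dotProduct_mulVec, ← hV]
    have hsm : star x ᵥ* V = star y := by
      rw [hy, star_mulVec, star_eq_conjTranspose, conjTranspose_conjTranspose]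
    rw [hsm, ← hy]
    simp only [mulVec_diagonal, dotProduct, Pi.star_apply, Function.comp]
    push_cast
    exact Finset.sum_congr rfl fun i _ => by
      rw [mul_left_comm, Complex.star_def, mul_comm ((starRingEnd ℂ) (y i)), Complex.mul_conj]
      push_cast
      rfl
  rw [key]
  have : 0 < ∑ i, hM.eigenvalues i * Complex.normSq (y i) := by
    obtain ⟨i, hi⟩ : ∃ i, y i ≠ 0 := by
      by_contra h
      push_neg at h
      exact hyne (funext h)
    apply Finset.sum_pos' (fun j _ => mul_nonneg (hpos j).le (Complex.normSq_nonneg _))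
    exact ⟨i, Finset.mem_univ i, mul_pos (hpos i) (Complex.normSq_pos.mpr hi)⟩
  exact_mod_cast this.ne'

lemma exists_common_eig (A M : Matrix (Fin d) (Fin d) ℂ) (hcomm : A * M = M * A)
    (hM : M.IsHermitian) (i : Fin d) :
    ∃ (lam : ℂ) (w : Fin d → ℂ), w ≠ 0 ∧ A *ᵥ w = lam • w ∧
      M *ᵥ w = ((hM.eigenvalues i : ℝ) : ℂ) • w := by
  set μ : ℂ := ((hM.eigenvalues i : ℝ) : ℂ) with hμ
  set p : Submodule ℂ (Fin d → ℂ) := Module.End.eigenspace (M.mulVecLin) μ with hp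
  have hmemp : ∀ v : Fin d → ℂ, v ∈ p ↔ M *ᵥ v = μ • v := by
    intro v
    rw [hp, Module.End.mem_eigenspace_iff, mulVecLin_apply]
  have hb : (⇑(hM.eigenvectorBasis i) : Fin d → ℂ) ∈ p := by
    rw [hmemp, hM.mulVec_eigenvectorBasis]
    ext j
    simp [Complex.real_smul, hμ]
  have hbne : (⇑(hM.eigenvectorBasis i) : Fin d → ℂ) ≠ 0 := by
    have h1 := hM.eigenvectorBasis.orthonormal.ne_zero i
    intro h
    apply h1
    ext j
    exact congrFun h j
  have hnt : Nontrivial p := by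
    refine ⟨⟨⟨_, hb⟩, 0, ?_⟩⟩
    simp only [ne_eq, Submodule.mk_eq_zero]
    exact hbne
  have hinv : ∀ v ∈ p, A.mulVecLin v ∈ p := by
    intro v hv
    rw [hmemp] at hv ⊢
    rw [mulVecLin_apply, mulVec_mulVec, ← hcomm, ← mulVec_mulVec, hv, mulVec_smul]
  set g : Module.End ℂ p := (A.mulVecLin).restrict hinv with hg
  obtain ⟨lam, hlam⟩ := Module.End.exists_eigenvalue g
  obtain ⟨w, hw⟩ := hlam.exists_hasEigenvector
  refine ⟨lam, (w : Fin d → ℂ), ?_, ?_, (hmemp _).mp w.2⟩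
  · simpa [ne_eq, Submodule.coe_eq_zero] using hw.right
  · have h2 := hw.apply_eq_smul
    have h3 := congrArg (Subtype.val) h2
    rw [hg] at h3
    simpa [LinearMap.restrict_apply, mulVecLin_apply] using h3

lemma fc_re (f : ℂ →L[ℝ] ℝ) (z : ℂ) :
    ((starRingEnd ℂ) ((f 1 : ℝ) + (f Complex.I : ℝ) * Complex.I) * z).re = f z := by
  have hz : z = (z.re : ℝ) • (1 : ℂ) + (z.im : ℝ) • Complex.I := by
    simp only [Complex.real_smul, Complex.ofReal_one, mul_one]
    exact (Complex.re_add_im z).symm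
  have : f z = z.re * f 1 + z.im * f Complex.I := by
    conv_lhs => rw [hz]
    rw [map_add, ContinuousLinearMap.map_smul, ContinuousLinearMap.map_smul]
    simp [smul_eq_mul]
  rw [this]
  simp [Complex.ext_iff, Complex.add_re, Complex.mul_re, Complex.mul_im]
  ring

lemma eig_finite (A : Matrix (Fin d) (Fin d) ℂ) :
    Set.Finite {lam : ℂ | ∃ w, w ≠ 0 ∧ A *ᵥ w = lam • w} := by
  apply (Matrix.finite_spectrum A).subset
  rintro lam ⟨w, hw0, hweq⟩
  rw [spectrum.mem_iff, Matrix.isUnit_iff_isUnit_det, isUnit_iff_ne_zero, ne_eq, not_not,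
    ← Matrix.exists_mulVec_eq_zero_iff]
  exact ⟨w, hw0, by
    rw [Algebra.algebraMap_eq_smul_one, sub_mulVec, smul_mulVec, one_mulVec, hweq,
      sub_self]⟩

lemma zero_mem_hull (A : Matrix (Fin d) (Fin d) ℂ) (hA : A ∈ Matrix.unitaryGroup (Fin d) ℂ)
    (x : Fin d → ℂ) (hx1 : star x ⬝ᵥ x = 1) (hx0 : star x ⬝ᵥ A *ᵥ x = 0) :
    (0 : ℂ) ∈ convexHull ℝ {lam : ℂ | ∃ w, w ≠ 0 ∧ A *ᵥ w = lam • w} := by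
  have hAl : Aᴴ * A = 1 := by
    have := hA.1
    rwa [star_eq_conjTranspose] at this
  have hAr : A * Aᴴ = 1 := by
    have := hA.2
    rwa [star_eq_conjTranspose] at this
  set S := {lam : ℂ | ∃ w, w ≠ 0 ∧ A *ᵥ w = lam • w} with hS
  have hSfin : S.Finite := eig_finite A
  by_contra hmem
  obtain ⟨f, u, hfu, hfS⟩ := geometric_hahn_banach_point_closed
    (convex_convexHull ℝ S) (hSfin.isCompact_convexHull (𝕜 := ℝ)).isClosed hmem
  rw [map_zero] at hfu
  set c : ℂ := (f 1 : ℝ) + (f Complex.I : ℝ) * Complex.I with hc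
  set M : Matrix (Fin d) (Fin d) ℂ := (starRingEnd ℂ c) • A + c • Aᴴ with hM
  have hMH : M.IsHermitian := by
    rw [Matrix.IsHermitian, hM, conjTranspose_add, conjTranspose_smul, conjTranspose_smul,
      conjTranspose_conjTranspose]
    simp only [Complex.star_def, Complex.conj_conj]
    exact add_comm _ _
  have hcomm : A * M = M * A := by
    rw [hM, Matrix.mul_add, Matrix.add_mul, Matrix.mul_smul, Matrix.mul_smul,
      Matrix.smul_mul, Matrix.smul_mul, hAl, hAr]
  have hx : x ≠ 0 := by
    intro h
    rw [h] at hx1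
    simp at hx1
  have hpos : ∀ i, 0 < hMH.eigenvalues i := by
    intro i
    obtain ⟨lam, w, hw0, hweq, hweqM⟩ := exists_common_eig A M hcomm hMH i
    have hlamS : lam ∈ S := ⟨w, hw0, hweq⟩
    have hflam : u < f lam := hfS lam (subset_convexHull ℝ S hlamS)
    have hww : (0:ℝ) < (star w ⬝ᵥ w).re := by
      have hw' : ∃ j, w j ≠ 0 := by
        by_contra hcon
        push_neg at hcon
        exact hw0 (funext hcon)
      obtain ⟨j, hj⟩ := hw'
      rw [sww_real, Complex.ofReal_re]
      exact Finset.sum_pos' (fun k _ => Complex.normSq_nonneg _)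
        ⟨j, Finset.mem_univ j, Complex.normSq_pos.mpr hj⟩
    have e1 : star w ⬝ᵥ M *ᵥ w = ((hMH.eigenvalues i : ℝ) : ℂ) * (star w ⬝ᵥ w) := by
      rw [hweqM, dotProduct_smul, smul_eq_mul]
    have hsww : (starRingEnd ℂ) (star w ⬝ᵥ w) = star w ⬝ᵥ w := by
      simp only [dotProduct, map_sum, Pi.star_apply, Complex.star_def]
      exact Finset.sum_congr rfl fun k _ => by rw [RingHom.map_mul, Complex.conj_conj, mul_comm]
    have e2 : star w ⬝ᵥ M *ᵥ w
        = ((starRingEnd ℂ c) * lam + c * (starRingEnd ℂ lam)) * (star w ⬝ᵥ w) := by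
      rw [hM, Matrix.add_mulVec, dotProduct_add, smul_mulVec, smul_mulVec,
        dotProduct_smul, dotProduct_smul, dot_conjT, hweq, dotProduct_smul]
      simp only [smul_eq_mul, RingHom.map_mul, hsww]
      ring
    have hsne : (star w ⬝ᵥ w) ≠ 0 := by
      intro h
      rw [h] at hww
      simp at hww
    have hmu : ((hMH.eigenvalues i : ℝ) : ℂ) = (starRingEnd ℂ) c * lam + c * (starRingEnd ℂ) lam :=
      mul_right_cancel₀ hsne (e1.symm.trans e2)
    have h2re : ((hMH.eigenvalues i : ℝ) : ℂ) = ((2 * ((starRingEnd ℂ) c * lam).re : ℝ) : ℂ) := by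
      rw [hmu]
      have hcc : c * (starRingEnd ℂ) lam = (starRingEnd ℂ) ((starRingEnd ℂ) c * lam) := by
        rw [RingHom.map_mul, Complex.conj_conj]
      rw [hcc, Complex.add_conj]
    have hev : hMH.eigenvalues i = 2 * ((starRingEnd ℂ) c * lam).re := by
      exact_mod_cast h2re
    have hre := fc_re f lam
    rw [← hc] at hre
    rw [hev, hre]
    linarith
  have hx0' : star x ⬝ᵥ M *ᵥ x = 0 := by
    rw [hM, add_mulVec, dotProduct_add, smul_mulVec, smul_mulVec, dotProduct_smul,
      dotProduct_smul, dot_conjT, hx0]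
    simp
  exact quad_ne M hMH hpos hx hx0'

lemma term_psd {r : ℝ} (hr : 0 ≤ r) (v : Fin d → ℂ) :
    (((r : ℝ) : ℂ) • vecMulVec v (star v)).PosSemidef := by
  have hs : ((Real.sqrt r : ℝ) : ℂ) * ((Real.sqrt r : ℝ) : ℂ) = (r : ℂ) := by
    rw [← Complex.ofReal_mul, Real.mul_self_sqrt hr]
  have h : ((r : ℂ) • vecMulVec v (star v)) =
      (Matrix.of fun i (_ : Fin 1) => ((Real.sqrt r : ℝ) : ℂ) * v i) *
        (Matrix.of fun i (_ : Fin 1) => ((Real.sqrt r : ℝ) : ℂ) * v i)ᴴ := by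
    ext i j
    simp only [Matrix.smul_apply, vecMulVec_apply, Matrix.mul_apply, conjTranspose_apply,
      Matrix.of_apply, Finset.univ_unique, Finset.sum_singleton, Pi.star_apply,
      Complex.star_def, smul_eq_mul]
    rw [RingHom.map_mul, Complex.conj_ofReal]
    rw [← hs]
    ring
  rw [h]
  exact posSemidef_self_mul_conjTranspose _

lemma trace_vecMulVec' (v w : Fin d → ℂ) : (vecMulVec v w).trace = w ⬝ᵥ v := by
  simp [Matrix.trace, Matrix.diag, vecMulVec_apply, dotProduct, mul_comm]

lemma trace_mul_vecMulVec (B : Matrix (Fin d) (Fin d) ℂ) (v w : Fin d → ℂ) :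
    (B * vecMulVec v w).trace = w ⬝ᵥ (B *ᵥ v) := by
  simp only [Matrix.trace, Matrix.diag, Matrix.mul_apply, vecMulVec_apply, dotProduct,
    Matrix.mulVec, Finset.mul_sum, Finset.sum_mul]
  refine Finset.sum_congr rfl fun i _ => Finset.sum_congr rfl fun j _ => by ring

end Stmt18Aux

open Stmt18Aux

theorem stmt18 (d : ℕ) (U E : Matrix (Fin d) (Fin d) ℂ)
    (hU : U ∈ Matrix.unitaryGroup (Fin d) ℂ)
    (hE : E ∈ Matrix.unitaryGroup (Fin d) ℂ) (hEdiag : E.IsDiag)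
    (δ : Fin d → ℝ) (hδ : ∀ i, 0 < δ i)
    (h0 : ∃ x : Fin d → ℂ, star x ⬝ᵥ x = 1 ∧ star x ⬝ᵥ (U * E).mulVec x = 0) :
    ∃ σ : Matrix (Fin d) (Fin d) ℂ, σ.PosSemidef ∧ σ.trace = 1 ∧
      (U * E * Matrix.diagonal (fun i => (δ i : ℂ)) * σ).trace = 0 := by
  classical
  obtain ⟨x, hx1, hx0⟩ := h0
  have hAu : U * E ∈ Matrix.unitaryGroup (Fin d) ℂ := mul_mem hU hE
  set A := U * E with hAdef
  set S := {lam : ℂ | ∃ w, w ≠ 0 ∧ A *ᵥ w = lam • w} with hSdef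
  have hSfin : S.Finite := eig_finite A
  have h00 : (0:ℂ) ∈ convexHull ℝ S := zero_mem_hull A hAu x hx1 hx0
  rw [← hSfin.coe_toFinset, Finset.mem_convexHull'] at h00
  obtain ⟨wt, hwt0, hwt1, hwts⟩ := h00
  set t := hSfin.toFinset with ht
  have hmem' : ∀ lam ∈ t, ∃ w : Fin d → ℂ, w ≠ 0 ∧ A *ᵥ w = lam • w := by
    intro lam hlam
    rw [ht, Set.Finite.mem_toFinset] at hlam
    exact hlam
  choose! uvec hu0 hueq using hmem'
  set ν : ℂ → Fin d → ℂ := fun lam j => uvec lam j / (δ j : ℂ) with hν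
  set tv : ℂ → ℝ := fun lam => ∑ j, Complex.normSq (uvec lam j) / δ j with htv
  set sv : ℂ → ℝ := fun lam => ∑ j, Complex.normSq (uvec lam j) / (δ j)^2 with hsv
  have hupos : ∀ lam ∈ t, ∃ j, uvec lam j ≠ 0 := by
    intro lam hl
    by_contra h
    push_neg at h
    exact hu0 lam hl (funext h)
  have htvpos : ∀ lam ∈ t, 0 < tv lam := by
    intro lam hl
    obtain ⟨j, hj⟩ := hupos lam hl
    exact Finset.sum_pos' (fun k _ => div_nonneg (Complex.normSq_nonneg _) (hδ k).le)
      ⟨j, Finset.mem_univ j, div_pos (Complex.normSq_pos.mpr hj) (hδ j)⟩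
  have hsvpos : ∀ lam ∈ t, 0 < sv lam := by
    intro lam hl
    obtain ⟨j, hj⟩ := hupos lam hl
    exact Finset.sum_pos' (fun k _ => div_nonneg (Complex.normSq_nonneg _) (pow_pos (hδ k) 2).le)
      ⟨j, Finset.mem_univ j, div_pos (Complex.normSq_pos.mpr hj) (pow_pos (hδ j) 2)⟩
  set N : ℝ := ∑ lam ∈ t, wt lam / tv lam * sv lam with hN
  have hNpos : 0 < N := by
    have hex : ∃ lam ∈ t, 0 < wt lam := by
      by_contra hcon
      push_neg at hcon
      have hle : ∑ y ∈ t, wt y ≤ 0 := Finset.sum_nonpos hcon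
      rw [hwt1] at hle
      linarith
    obtain ⟨lam, hl, hwl⟩ := hex
    refine Finset.sum_pos' (fun k hk => mul_nonneg (div_nonneg (hwt0 k hk) (htvpos k hk).le)
      (hsvpos k hk).le) ⟨lam, hl, mul_pos (div_pos hwl (htvpos lam hl)) (hsvpos lam hl)⟩
  set σ : Matrix (Fin d) (Fin d) ℂ :=
    ∑ lam ∈ t, ((wt lam / (tv lam * N) : ℝ) : ℂ) • vecMulVec (ν lam) (star (ν lam)) with hσ
  have hcoef : ∀ lam ∈ t, 0 ≤ wt lam / (tv lam * N) := fun lam hl =>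
    div_nonneg (hwt0 lam hl) (mul_nonneg (htvpos lam hl).le hNpos.le)
  refine ⟨σ, ?_, ?_, ?_⟩
  · rw [hσ]
    refine Finset.sum_induction _ Matrix.PosSemidef (fun a b ha hb => ha.add hb)
      Matrix.PosSemidef.zero ?_
    intro lam hl
    exact term_psd (hcoef lam hl) (ν lam)
  · rw [hσ, trace_sum]
    have hterm : ∀ lam ∈ t,
        (((wt lam / (tv lam * N) : ℝ) : ℂ) • vecMulVec (ν lam) (star (ν lam))).trace
          = ((wt lam / (tv lam * N) * sv lam : ℝ) : ℂ) := by
      intro lam hl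
      rw [trace_smul, trace_vecMulVec', sww_real (ν lam)]
      have hnv : ∑ k, Complex.normSq (ν lam k) = sv lam := by
        rw [hsv]
        refine Finset.sum_congr rfl fun k _ => ?_
        rw [hν]
        simp [Complex.normSq_div, Complex.normSq_ofReal, sq]
      rw [hnv, smul_eq_mul, ← Complex.ofReal_mul]
    rw [Finset.sum_congr rfl hterm, ← Complex.ofReal_sum]
    have hsum : ∑ lam ∈ t, wt lam / (tv lam * N) * sv lam = 1 := by
      have heq : ∀ lam ∈ t, wt lam / (tv lam * N) * sv lam = wt lam / tv lam * sv lam / N := by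
        intro lam _
        ring
      rw [Finset.sum_congr rfl heq, ← Finset.sum_div, ← hN, div_self hNpos.ne']
    rw [hsum, Complex.ofReal_one]
  · have hDν : ∀ lam, Matrix.diagonal (fun i => (δ i : ℂ)) *ᵥ ν lam = uvec lam := by
      intro lam
      ext j
      rw [mulVec_diagonal, hν]
      exact mul_div_cancel₀ _ (by exact_mod_cast (hδ j).ne')
    have hkey : ∀ lam ∈ t,
        (A * Matrix.diagonal (fun i => (δ i : ℂ)) * vecMulVec (ν lam) (star (ν lam))).trace
          = lam * ((tv lam : ℝ) : ℂ) := by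
      intro lam hl
      rw [trace_mul_vecMulVec, ← mulVec_mulVec, hDν, hueq lam hl, dotProduct_smul, smul_eq_mul]
      congr 1
      rw [htv]
      push_cast
      simp only [dotProduct, Pi.star_apply, hν, Complex.star_def]
      refine Finset.sum_congr rfl fun k _ => ?_
      rw [map_div₀, Complex.conj_ofReal, div_mul_eq_mul_div, mul_comm, Complex.mul_conj]
    rw [hσ, Matrix.mul_sum, trace_sum]
    have hterm2 : ∀ lam ∈ t,
        (A * Matrix.diagonal (fun i => (δ i : ℂ)) *
          (((wt lam / (tv lam * N) : ℝ) : ℂ) • vecMulVec (ν lam) (star (ν lam)))).trace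
          = ((wt lam : ℝ) : ℂ) * lam * ((N : ℝ) : ℂ)⁻¹ := by
      intro lam hl
      rw [Matrix.mul_smul, trace_smul, smul_eq_mul, hkey lam hl]
      have h1 : ((tv lam : ℝ) : ℂ) ≠ 0 := by exact_mod_cast (htvpos lam hl).ne'
      have h2 : ((N : ℝ) : ℂ) ≠ 0 := by exact_mod_cast hNpos.ne'
      push_cast
      field_simp
    rw [Finset.sum_congr rfl hterm2, ← Finset.sum_mul]
    have hzero : ∑ lam ∈ t, ((wt lam : ℝ) : ℂ) * lam = 0 := by
      have := hwts
      rw [← this]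
      exact Finset.sum_congr rfl fun lam _ => (Complex.real_smul).symm
    rw [hzero, zero_mul]
end

section
/- Let ρ be a d×d density matrix, |i⟩ the standard basis vectors, and u_i the columns of a unitary U. Then for each i, the trace norm of √ρ(|i⟩⟨i| − |u_i⟩⟨u_i|)√ρ equals √((⟨i|ρ|i⟩ + ⟨u_i|ρ|u_i⟩)² − 4|⟨i|ρ|u_i⟩|²). -/
open Matrix
open scoped ComplexOrder

/-- The positive semidefinite square root of a positive semidefinite matrix
(the definition of `Matrix.PosSemidef.sqrt` in the older Mathlib, since removed). -/
noncomputable def Matrix.PosSemidef.sqrt {n 𝕜 : Type*} [Fintype n] [DecidableEq n] [RCLike 𝕜]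
    {A : Matrix n n 𝕜} (hA : A.PosSemidef) : Matrix n n 𝕜 :=
  (hA.1.eigenvectorUnitary : Matrix n n 𝕜) *
    diagonal (fun i => ((Real.sqrt (hA.1.eigenvalues i) : ℝ) : 𝕜)) *
    (star hA.1.eigenvectorUnitary : Matrix n n 𝕜)

/-- The trace norm `‖A‖₁ = Tr √(AᴴA)` of a complex square matrix. -/
noncomputable def traceNorm {d : ℕ} (A : Matrix (Fin d) (Fin d) ℂ) : ℂ :=
  (Matrix.posSemidef_conjTranspose_mul_self A).sqrt.trace

lemma Matrix.PosSemidef.posSemidef_sqrt {n 𝕜 : Type*} [Fintype n] [DecidableEq n] [RCLike 𝕜]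
    {A : Matrix n n 𝕜} (hA : A.PosSemidef) : hA.sqrt.PosSemidef := by
  unfold Matrix.PosSemidef.sqrt
  have hd : (diagonal (fun i => ((Real.sqrt (hA.1.eigenvalues i) : ℝ) : 𝕜))).PosSemidef :=
    posSemidef_diagonal_iff.mpr fun i => RCLike.ofReal_nonneg.mpr (Real.sqrt_nonneg _)
  exact hd.mul_mul_conjTranspose_same _

lemma Matrix.PosSemidef.sqrt_mul_self {n 𝕜 : Type*} [Fintype n] [DecidableEq n] [RCLike 𝕜]
    {A : Matrix n n 𝕜} (hA : A.PosSemidef) : hA.sqrt * hA.sqrt = A := by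
  set V : Matrix n n 𝕜 := (hA.1.eigenvectorUnitary : Matrix n n 𝕜) with hV
  set E : Matrix n n 𝕜 := diagonal (fun i => ((Real.sqrt (hA.1.eigenvalues i) : ℝ) : 𝕜)) with hE
  have hVV : star V * V = 1 := (Matrix.mem_unitaryGroup_iff').mp hA.1.eigenvectorUnitary.2
  have hEE : E * E = diagonal (RCLike.ofReal ∘ hA.1.eigenvalues) := by
    rw [hE, diagonal_mul_diagonal]
    congr 1
    funext i
    rw [Function.comp_apply, ← RCLike.ofReal_mul, Real.mul_self_sqrt (hA.eigenvalues_nonneg i)]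
  have hs : hA.sqrt = V * E * star V := rfl
  have hspec : A = V * diagonal (RCLike.ofReal ∘ hA.1.eigenvalues) * star V :=
    hA.1.spectral_theorem
  rw [hs, hspec, ← hEE]
  simp only [mul_assoc]
  rw [← mul_assoc (star V) V, hVV, one_mul]

open scoped MatrixOrder in
lemma Matrix.PosSemidef.eq_sqrt_of_sq_eq {n 𝕜 : Type*} [Fintype n] [DecidableEq n] [RCLike 𝕜]
    {A B : Matrix n n 𝕜} (hB : B.PosSemidef) (hA : A.PosSemidef) (h : B ^ 2 = A) :
    B = hA.sqrt := by
  have h1 := CFC.sqrt_unique (a := A) (b := B) (by rwa [sq] at h) hB.nonneg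
  have h2 := CFC.sqrt_unique (a := A) (b := hA.sqrt) hA.sqrt_mul_self hA.posSemidef_sqrt.nonneg
  rw [← h1, h2]

lemma vmv_mul {d : ℕ} (x y z t : Fin d → ℂ) :
    vecMulVec x (star y) * vecMulVec z (star t)
      = (star y ⬝ᵥ z) • vecMulVec x (star t) := by
  ext i j
  simp only [Matrix.mul_apply, vecMulVec_apply, Matrix.smul_apply, dotProduct, smul_eq_mul,
    Finset.sum_mul]
  exact Finset.sum_congr rfl fun k _ => by ring

lemma vmv_herm {d : ℕ} (x : Fin d → ℂ) : (vecMulVec x (star x))ᴴ = vecMulVec x (star x) := by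
  ext i j; simp [conjTranspose_apply, vecMulVec_apply, mul_comm]

lemma vmv_trace {d : ℕ} (x y : Fin d → ℂ) : (vecMulVec x (star y)).trace = star y ⬝ᵥ x := by
  simp [Matrix.trace, Matrix.diag, vecMulVec_apply, dotProduct, mul_comm]

section core
variable {d : ℕ} (v w : Fin d → ℂ)

lemma cube_id :
    (vecMulVec v (star v) - vecMulVec w (star w)) * (vecMulVec v (star v) - vecMulVec w (star w))
        * (vecMulVec v (star v) - vecMulVec w (star w))
      = (star v ⬝ᵥ v - star w ⬝ᵥ w) •
          ((vecMulVec v (star v) - vecMulVec w (star w)) *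
            (vecMulVec v (star v) - vecMulVec w (star w)))
      + ((star v ⬝ᵥ v) * (star w ⬝ᵥ w) - (star v ⬝ᵥ w) * (star w ⬝ᵥ v)) •
          (vecMulVec v (star v) - vecMulVec w (star w)) := by
  have hPP := vmv_mul v v v v
  have hPQ := vmv_mul v v w w
  have hQP := vmv_mul w w v v
  have hQQ := vmv_mul w w w w
  have hPR := vmv_mul v v v w
  have hPR' := vmv_mul v v w v
  have hQR := vmv_mul w w v w
  have hQR' := vmv_mul w w w v
  have hRP := vmv_mul v w v v
  have hRQ := vmv_mul v w w w
  have hR'P := vmv_mul w v v v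
  have hR'Q := vmv_mul w v w w
  simp only [sub_mul, mul_sub, smul_mul_assoc, mul_smul_comm, hPP, hPQ, hQP, hQQ, hPR, hPR',
    hQR, hQR', hRP, hRQ, hR'P, hR'Q, smul_smul, smul_sub, sub_smul]
  module
end core


lemma tr_ctms_zero {d : ℕ} (M : Matrix (Fin d) (Fin d) ℂ)
    (h : (Mᴴ * M).trace = 0) : M = 0 := by
  have key : (Mᴴ * M).trace = ((∑ i, ∑ j, Complex.normSq (M j i) : ℝ) : ℂ) := by
    push_cast
    simp only [Matrix.trace, Matrix.diag, Matrix.mul_apply, Matrix.conjTranspose_apply,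
      Complex.star_def]
    refine Finset.sum_congr rfl fun i _ => Finset.sum_congr rfl fun j _ => ?_
    rw [Complex.normSq_eq_conj_mul_self]
  rw [key, Complex.ofReal_eq_zero] at h
  have h2 := (Finset.sum_eq_zero_iff_of_nonneg (fun i _ =>
    Finset.sum_nonneg fun j _ => Complex.normSq_nonneg _)).mp h
  ext j i
  have h3 := (Finset.sum_eq_zero_iff_of_nonneg (fun j _ => Complex.normSq_nonneg _)).mp
    (h2 i (Finset.mem_univ i)) j (Finset.mem_univ j)
  simpa using Complex.normSq_eq_zero.mp h3


set_option maxHeartbeats 1600000 in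
theorem key {d : ℕ} (v w : Fin d → ℂ) :
    traceNorm (vecMulVec v (star v) - vecMulVec w (star w))
      = ((Real.sqrt (((star v ⬝ᵥ v).re + (star w ⬝ᵥ w).re) ^ 2
          - 4 * ‖star v ⬝ᵥ w‖ ^ 2) : ℝ) : ℂ) := by
  set P := vecMulVec v (star v) with hPdef
  set Q := vecMulVec w (star w) with hQdef
  set A := P - Q with hAdef
  set a := star v ⬝ᵥ v with hadef
  set b := star w ⬝ᵥ w with hbdef
  set c := star v ⬝ᵥ w with hcdef
  set c' := star w ⬝ᵥ v with hc'def
  set ar := a.re with hardef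
  set br := b.re with hbrdef
  set cc := ‖c‖ with hccdef
  set T := Real.sqrt ((ar + br) ^ 2 - 4 * cc ^ 2) with hTdef
  -- real/star facts
  have f1 : c' = star c := by rw [hcdef, star_dotProduct, star_star]
  have f2 : a = (ar : ℂ) := by
    have : (starRingEnd ℂ) a = a := by
      rw [hadef]; conv_lhs => rw [← Complex.star_def, star_dotProduct, star_star]
    exact (Complex.conj_eq_iff_re.mp this).symm
  have f3 : b = (br : ℂ) := by
    have : (starRingEnd ℂ) b = b := by
      rw [hbdef]; conv_lhs => rw [← Complex.star_def, star_dotProduct, star_star]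
    exact (Complex.conj_eq_iff_re.mp this).symm
  have f4 : c * c' = ((cc ^ 2 : ℝ) : ℂ) := by
    rw [f1, Complex.star_def, Complex.mul_conj]
    norm_cast
    rw [hccdef, Complex.sq_norm]
  -- Euclidean space facts
  set ve : EuclideanSpace ℂ (Fin d) := (WithLp.equiv 2 _).symm v with hve
  set we : EuclideanSpace ℂ (Fin d) := (WithLp.equiv 2 _).symm w with hwe
  have hiv : (inner ℂ ve ve : ℂ) = a := by rw [hadef, dotProduct_comm]; rfl
  have hiw : (inner ℂ we we : ℂ) = b := by rw [hbdef, dotProduct_comm]; rfl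
  have hic : (inner ℂ ve we : ℂ) = c := by rw [hcdef, dotProduct_comm]; rfl
  have f5 : ar = ‖ve‖ ^ 2 := by
    rw [hardef, ← hiv]; exact inner_self_eq_norm_sq (𝕜 := ℂ) ve
  have f5' : br = ‖we‖ ^ 2 := by
    rw [hbrdef, ← hiw]; exact inner_self_eq_norm_sq (𝕜 := ℂ) we
  have f6 : cc ^ 2 ≤ ar * br := by
    have h1 : cc ≤ ‖ve‖ * ‖we‖ := by
      rw [hccdef, ← hic]; exact norm_inner_le_norm ve we
    have h2 : (0:ℝ) ≤ cc := by rw [hccdef]; exact norm_nonneg _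
    rw [f5, f5']; nlinarith [mul_le_mul h1 h1 h2 (mul_nonneg (norm_nonneg ve) (norm_nonneg we))]
  have f5n : 0 ≤ ar := by rw [f5]; positivity
  have f5n' : 0 ≤ br := by rw [f5']; positivity
  have f7 : 0 ≤ (ar + br) ^ 2 - 4 * cc ^ 2 := by nlinarith [f6, sq_nonneg (ar - br)]
  have hT2 : T ^ 2 = (ar + br) ^ 2 - 4 * cc ^ 2 := Real.sq_sqrt f7
  have hTnn : 0 ≤ T := Real.sqrt_nonneg _
  clear_value P Q A a b c c' ar br cc T ve we
  -- matrix algebra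
  have hHerm : A.IsHermitian := by
    rw [hAdef, hPdef, hQdef]
    exact Matrix.IsHermitian.sub (vmv_herm v) (vmv_herm w)
  have hcube : A * A * A = (a - b) • (A * A) + (a * b - c * c') • A := by
    rw [hAdef, hPdef, hQdef, hadef, hbdef, hcdef, hc'def]; exact cube_id v w
  have hA2exp : A * A = a • P + b • Q - c • (vecMulVec v (star w))
      - c' • (vecMulVec w (star v)) := by
    rw [hAdef, hPdef, hQdef]
    simp only [sub_mul, mul_sub, vmv_mul, ← hadef, ← hbdef, ← hcdef, ← hc'def]
    module
  have htrA : A.trace = a - b := by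
    rw [hAdef, trace_sub, hPdef, hQdef, vmv_trace, vmv_trace, ← hadef, ← hbdef]
  have htrA2 : (A * A).trace = (a - b) * (a - b) + 2 * (a * b - c * c') := by
    rw [hA2exp]
    simp only [trace_sub, trace_add, trace_smul, hPdef, hQdef, vmv_trace, smul_eq_mul,
      ← hadef, ← hbdef, ← hcdef, ← hc'def]
    ring
  rcases eq_or_lt_of_le hTnn with hT0 | hTpos
  · -- degenerate case : A = 0
    have h0 : (ar + br) ^ 2 - 4 * cc ^ 2 = 0 := by rw [← hT0] at hT2; simpa using hT2.symm
    have h1 : (ar - br) * (ar - br) + 2 * (ar * br - cc ^ 2) = 0 := by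
      nlinarith [f6, sq_nonneg (ar - br)]
    have hA0 : A = 0 := by
      apply tr_ctms_zero
      rw [show Aᴴ * A = A * A from by rw [hHerm.eq]]
      rw [htrA2, f2, f3, f4]
      push_cast
      exact_mod_cast congrArg (Complex.ofReal) h1
    rw [hA0]
    have hz : (0 : Matrix (Fin d) (Fin d) ℂ)
        = (posSemidef_conjTranspose_mul_self (0 : Matrix (Fin d) (Fin d) ℂ)).sqrt :=
      Matrix.PosSemidef.eq_sqrt_of_sq_eq (Matrix.PosSemidef.zero) _ (by simp)
    show (posSemidef_conjTranspose_mul_self (0 : Matrix (Fin d) (Fin d) ℂ)).sqrt.trace = _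
    rw [← hz, trace_zero, ← hT0, Complex.ofReal_zero]
  · -- main case
    have hTne : T ≠ 0 := ne_of_gt hTpos
    have hTcne : (T : ℂ) ≠ 0 := by exact_mod_cast hTne
    have hTc : (T : ℂ) * (T : ℂ) = (a - b) * (a - b) + 4 * (a * b - c * c') := by
      rw [f2, f3, f4]
      have hr : T * T = (ar - br) * (ar - br) + 4 * (ar * br - cc ^ 2) := by nlinarith [hT2]
      push_cast
      exact_mod_cast congrArg (Complex.ofReal) hr
    have h3 : (A * A) * A = (a - b) • (A * A) + (a * b - c * c') • A := hcube
    have h3' : A * (A * A) = (a - b) • (A * A) + (a * b - c * c') • A := by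
      rw [← mul_assoc]; exact h3
    have h4 : (A * A) * (A * A) = ((a - b) * (a - b) + (a * b - c * c')) • (A * A)
        + ((a - b) * (a * b - c * c')) • A := by
      rw [show (A * A) * (A * A) = ((A * A) * A) * A from (mul_assoc (A*A) A A).symm]
      rw [h3, add_mul, smul_mul_assoc, smul_mul_assoc, h3]
      module
    set S := ((T : ℂ))⁻¹ • ((2 : ℂ) • (A * A) - (a - b) • A) with hSdef
    have key2 : ((2 : ℂ) • (A * A) - (a - b) • A) * ((2 : ℂ) • (A * A) - (a - b) • A)
        = ((T : ℂ) * (T : ℂ)) • (A * A) := by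
      rw [hTc]
      simp only [mul_sub, sub_mul, smul_mul_assoc, mul_smul_comm, smul_smul, h3, h3', h4]
      module
    have hS2 : S ^ 2 = Aᴴ * A := by
      rw [show Aᴴ * A = A * A from by rw [hHerm.eq]]
      rw [pow_two, hSdef, smul_mul_assoc, mul_smul_comm, key2, smul_smul, smul_smul]
      match_scalars
      field_simp
    have hStr : S.trace = (T : ℂ) := by
      rw [hSdef, trace_smul, trace_sub, trace_smul, trace_smul, htrA, htrA2]
      simp only [smul_eq_mul]
      field_simp
      linear_combination -hTc
    -- spectral theorem setup
    set V : Matrix (Fin d) (Fin d) ℂ := (hHerm.eigenvectorUnitary : Matrix (Fin d) (Fin d) ℂ)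
      with hVdef
    set g := hHerm.eigenvalues with hgdef
    set Dg : Matrix (Fin d) (Fin d) ℂ := diagonal (RCLike.ofReal ∘ g) with hDgdef
    have hspec : A = V * Dg * star V := hHerm.spectral_theorem
    have hVV : star V * V = 1 :=
      (Matrix.mem_unitaryGroup_iff').mp hHerm.eigenvectorUnitary.2
    -- eigenvalue cubic
    have hroot : ∀ j, ((g j : ℂ))^3
        = (a - b) * (g j : ℂ)^2 + (a*b - c*c') * (g j : ℂ) := by
      intro j
      have hnz : ⇑(hHerm.eigenvectorBasis j) ≠ (0 : Fin d → ℂ) := by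
        have h := hHerm.eigenvectorBasis.orthonormal.ne_zero j
        intro hcontra
        apply h
        ext k
        exact congrFun hcontra k
      have h1 : A *ᵥ ⇑(hHerm.eigenvectorBasis j)
          = (g j : ℂ) • ⇑(hHerm.eigenvectorBasis j) := by
        rw [hHerm.mulVec_eigenvectorBasis j]
        ext k
        simp [Complex.real_smul, hgdef]
      have h2 : (A * A) *ᵥ ⇑(hHerm.eigenvectorBasis j)
          = ((g j : ℂ)^2) • ⇑(hHerm.eigenvectorBasis j) := by
        rw [← mulVec_mulVec, h1, mulVec_smul, h1, smul_smul, pow_two]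
      have h3v : (A * A * A) *ᵥ ⇑(hHerm.eigenvectorBasis j)
          = ((g j : ℂ)^3) • ⇑(hHerm.eigenvectorBasis j) := by
        rw [← mulVec_mulVec, h1, mulVec_smul, h2, smul_smul,
          show (g j : ℂ) * (g j : ℂ)^2 = (g j : ℂ)^3 from by ring]
      rw [hcube, add_mulVec, smul_mulVec, smul_mulVec, h2, h1, smul_smul,
        smul_smul, ← add_smul] at h3v
      exact (smul_left_injective ℂ hnz h3v).symm
    -- nonnegativity of the diagonal entries
    have hD : (0:ℝ) ≤ ar * br - cc ^ 2 := by nlinarith [f6]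
    have hfnn : ∀ j, 0 ≤ T⁻¹ * (2 * (g j)^2 - (ar - br) * (g j)) := by
      intro j
      have hc3 : (g j)^3 = (ar - br) * (g j)^2 + (ar*br - cc^2) * (g j) := by
        have := hroot j
        rw [f2, f3, f4] at this
        exact_mod_cast this
      rcases eq_or_ne (g j) 0 with h0 | hne
      · simp [h0]
      · have hfac : (g j) * ((g j)^2 - ((ar - br) * (g j) + (ar*br - cc^2))) = 0 := by
          linear_combination hc3
        have h2' : (g j)^2 = (ar - br) * (g j) + (ar*br - cc^2) := by
          have := (mul_eq_zero.mp hfac).resolve_left hne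
          linarith [this]
        have : 2 * (g j)^2 - (ar - br) * (g j) = (g j)^2 + (ar*br - cc^2) := by
          linear_combination h2'
        rw [this]
        have := sq_nonneg (g j)
        positivity
    -- S in spectral form
    have hVV' : ∀ X : Matrix (Fin d) (Fin d) ℂ, star V * (V * X) = X := fun X => by
      rw [← mul_assoc, hVV, one_mul]
    have hA2V : (V * Dg * star V) * (V * Dg * star V) = V * (Dg * Dg) * star V := by
      simp only [mul_assoc, hVV']
    have hdiag : diagonal (fun j => ((T⁻¹ * (2 * (g j)^2 - (ar - br) * (g j)) : ℝ) : ℂ))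
        = ((T:ℂ))⁻¹ • ((2:ℂ) • (Dg * Dg) - (a - b) • Dg) := by
      ext i j
      rcases eq_or_ne i j with rfl | hij
      · simp only [hDgdef, diagonal_mul_diagonal, Matrix.smul_apply, Matrix.sub_apply,
          Matrix.diagonal_apply_eq, Function.comp_apply, smul_eq_mul,
          show (RCLike.ofReal : ℝ → ℂ) = Complex.ofReal from rfl]
        rw [f2, f3]
        push_cast
        ring
      · simp [hDgdef, diagonal_mul_diagonal, Matrix.diagonal_apply_ne _ hij]
    have hSspec : S = V * diagonal
        (fun j => ((T⁻¹ * (2 * (g j)^2 - (ar - br) * (g j)) : ℝ) : ℂ)) * star V := by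
      rw [hSdef, hdiag, hspec, hA2V]
      simp only [Matrix.mul_smul, Matrix.smul_mul, mul_sub, sub_mul, smul_sub]
    have hSpsd : S.PosSemidef := by
      rw [hSspec]
      have hd : (diagonal
          (fun j => ((T⁻¹ * (2 * (g j)^2 - (ar - br) * (g j)) : ℝ) : ℂ))).PosSemidef :=
        posSemidef_diagonal_iff.mpr (fun j => Complex.zero_le_real.mpr (hfnn j))
      exact hd.mul_mul_conjTranspose_same V
    -- conclusion
    have hsqrt : S = (posSemidef_conjTranspose_mul_self A).sqrt :=
      hSpsd.eq_sqrt_of_sq_eq _ hS2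
    show (posSemidef_conjTranspose_mul_self A).sqrt.trace = ((T:ℝ) : ℂ)
    rw [← hsqrt]
    exact hStr

lemma mul_vmv_mul {d : ℕ} (M N : Matrix (Fin d) (Fin d) ℂ) (x y : Fin d → ℂ) :
    M * vecMulVec x y * N = vecMulVec (M *ᵥ x) (y ᵥ* N) := by
  ext i j
  simp only [Matrix.mul_apply, vecMulVec_apply, mulVec, vecMul, dotProduct, Finset.sum_mul,
    Finset.mul_sum]
  exact Finset.sum_congr rfl fun q _ => Finset.sum_congr rfl fun p _ => by ring

lemma dot_aux {d : ℕ} (M : Matrix (Fin d) (Fin d) ℂ) (hM : Mᴴ = M) (x y : Fin d → ℂ) :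
    star (M *ᵥ x) ⬝ᵥ (M *ᵥ y) = star x ⬝ᵥ ((M * M) *ᵥ y) := by
  rw [star_mulVec, hM, dotProduct_mulVec, vecMul_vecMul, ← dotProduct_mulVec]

theorem stmt19 (d : ℕ) (ρ : Matrix (Fin d) (Fin d) ℂ)
    (hρ : ρ.PosSemidef) (hρtr : ρ.trace = 1)
    (U : Matrix (Fin d) (Fin d) ℂ) (hU : U ∈ Matrix.unitaryGroup (Fin d) ℂ) :
    ∀ i : Fin d,
      traceNorm (hρ.sqrt *
          (Matrix.single i i (1 : ℂ) -
            Matrix.vecMulVec (fun k => U k i) (star (fun k => U k i))) * hρ.sqrt)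
        = (Real.sqrt ((((ρ i i).re +
              (star (fun k => U k i) ⬝ᵥ ρ.mulVec (fun k => U k i)).re) ^ 2)
            - 4 * ‖ρ.mulVec (fun k => U k i) i‖ ^ 2) : ℝ) := by
  intro i
  set u : Fin d → ℂ := fun k => U k i with hu
  set M := hρ.sqrt with hM
  have hMh : Mᴴ = M := hρ.posSemidef_sqrt.1
  have hMM : M * M = ρ := hρ.sqrt_mul_self
  set e : Fin d → ℂ := Pi.single i 1 with he
  have hse : star e = e := by
    ext k
    simp [he, Pi.single_apply, apply_ite (star : ℂ → ℂ)]
  have hsw : ∀ x : Fin d → ℂ, star x ᵥ* M = star (M *ᵥ x) := by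
    intro x
    rw [star_mulVec, hMh]
  have hmat : M * (Matrix.single i i (1:ℂ) - vecMulVec u (star u)) * M
      = vecMulVec (M *ᵥ e) (star (M *ᵥ e)) - vecMulVec (M *ᵥ u) (star (M *ᵥ u)) := by
    rw [mul_sub, sub_mul, Matrix.single_eq_single_vecMulVec_single, ← he,
      show vecMulVec e e = vecMulVec e (star e) from by rw [hse],
      mul_vmv_mul, mul_vmv_mul, hsw, hsw]
  have e1 : star (M *ᵥ e) ⬝ᵥ (M *ᵥ e) = ρ i i := by
    rw [dot_aux M hMh, hMM, hse, he]
    simp [single_dotProduct, Matrix.mulVec_single]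
  have e2 : star (M *ᵥ u) ⬝ᵥ (M *ᵥ u) = star u ⬝ᵥ ρ.mulVec u := by
    rw [dot_aux M hMh, hMM]
  have e3 : star (M *ᵥ e) ⬝ᵥ (M *ᵥ u) = ρ.mulVec u i := by
    rw [dot_aux M hMh, hMM, hse, he]
    simp [single_dotProduct]
  rw [hmat, key, e1, e2, e3]
end
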